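/- arXiv:1803.03774 — 13 statements merged into one kernel-verified Lean document; each statement's English description precedes it below -/
import Mathlib

section
/- Let (ω, c) ∈ ℝ² satisfy condition (WC). Then the function η₃ ↦ η₂(η₃) = (−η₃ + 4c + √(A(η₃)))/2 is strictly decreasing on the open interval (α₀, α₁), and 0 < η₂(η₃) < α₀ for every η₃ ∈ (α₀, α₁). -/
open Real

theorem stmt_2 (ω c : ℝ) (hWC : ω > c ^ 2 / 4 ∨ (ω = c ^ 2 / 4 ∧ c > 0))
    (α₀ α₁ : ℝ)
    (hα₀ : α₀ = (4 * c + Real.sqrt (48 * ω + 4 * c ^ 2)) / 3)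
    (hα₁ : α₁ = 4 * Real.sqrt ω + 2 * c)
    (η₂ : ℝ → ℝ)
    (hη₂ : ∀ t, η₂ t = (-t + 4 * c + Real.sqrt (64 * ω - 3 * t ^ 2 + 8 * c * t)) / 2) :
    StrictAntiOn η₂ (Set.Ioo α₀ α₁) ∧
      ∀ t ∈ Set.Ioo α₀ α₁, 0 < η₂ t ∧ η₂ t < α₀ := by
  have hωpos : 0 < ω := by
    rcases hWC with h | ⟨h, hc⟩ <;> nlinarith [sq_nonneg c]
  have h4ωc : c ^ 2 ≤ 4 * ω := by
    rcases hWC with h | ⟨h, _⟩ <;> nlinarith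
  set r := Real.sqrt ω with hr
  have hr0 : 0 < r := Real.sqrt_pos.2 hωpos
  have hr2 : r ^ 2 = ω := Real.sq_sqrt hωpos.le
  set s := Real.sqrt (48 * ω + 4 * c ^ 2) with hs
  have hs0 : 0 ≤ s := Real.sqrt_nonneg _
  have hs2 : s ^ 2 = 48 * ω + 4 * c ^ 2 := Real.sq_sqrt (by nlinarith)
  have h3α₀ : 3 * α₀ = 4 * c + s := by rw [hα₀]; ring
  have hcr : c ≤ 2 * r := by nlinarith
  -- η₂ α₀ = α₀
  have hAα₀ : 64 * ω - 3 * α₀ ^ 2 + 8 * c * α₀ = s ^ 2 := by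
    rw [hα₀]; linear_combination (-(4 : ℝ) / 3) * hs2
  have hfix : η₂ α₀ = α₀ := by
    rw [hη₂, hAα₀, Real.sqrt_sq hs0]; linarith
  -- key decreasing fact
  have key : ∀ t₁ t₂ : ℝ, α₀ ≤ t₁ → t₁ < t₂ → η₂ t₂ < η₂ t₁ := by
    intro t₁ t₂ h1 h12
    have hA : 64 * ω - 3 * t₂ ^ 2 + 8 * c * t₂ ≤ 64 * ω - 3 * t₁ ^ 2 + 8 * c * t₁ := by
      nlinarith [mul_nonneg (le_of_lt (sub_pos.2 h12)) (by linarith : (0:ℝ) ≤ 3 * t₁ + 3 * t₂ - 8 * c)]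
    have := Real.sqrt_le_sqrt hA
    rw [hη₂, hη₂]; linarith
  constructor
  · intro t₁ h₁ t₂ h₂ h12
    exact key t₁ t₂ h₁.1.le h12
  · rintro t ⟨ht1, ht2⟩
    refine ⟨?_, by simpa [hfix] using key α₀ t le_rfl ht1⟩
    rw [hη₂]
    have hsq0 : 0 ≤ Real.sqrt (64 * ω - 3 * t ^ 2 + 8 * c * t) := Real.sqrt_nonneg _
    rcases lt_or_ge t (4 * c) with hc4 | hc4
    · linarith
    · -- t ≥ 4c : show t - 4c < sqrt A
      have h3t : 4 * c < 3 * t := by linarith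
      have h1 : t - 2 * c < 4 * r := by rw [hα₁] at ht2; linarith
      have h2 : -(4 * r) < t - 2 * c := by
        rcases le_or_gt 0 c with hc | hc
        · linarith
        · linarith
      have hlt : (t - 4 * c) ^ 2 < 64 * ω - 3 * t ^ 2 + 8 * c * t := by
        nlinarith [mul_pos (by linarith : (0:ℝ) < 4 * r - (t - 2 * c))
          (by linarith : (0:ℝ) < 4 * r + (t - 2 * c))]
      have := (Real.lt_sqrt (by linarith : (0:ℝ) ≤ t - 4 * c)).2 hlt
      linarith
end

section
/- Fix s ∈ (−1, 1] and define ξ(η) = (−η + 2s + √(f_s(η)))/2. Then for every η ∈ (β₀(s), β₁(s)), the function ξ is differentiable at η and its derivative satisfies ξ'(η) < −1/2. -/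
open Real

theorem stmt_3 (s : ℝ) (hs : s ∈ Set.Ioc (-1 : ℝ) 1)
    (ξ : ℝ → ℝ)
    (hξ : ∀ η, ξ η = (-η + 2 * s + Real.sqrt (-3 * η ^ 2 + 4 * s * η + 4)) / 2) :
    ∀ η ∈ Set.Ioo ((2 * s + Real.sqrt (3 + s ^ 2)) / 3) (1 + s),
      DifferentiableAt ℝ ξ η ∧ deriv ξ η < -1 / 2 := by
  obtain ⟨hs1, hs2⟩ := hs
  intro η hη
  obtain ⟨h1, h2⟩ := hη
  have hfun : ξ = fun x => (-x + 2 * s + Real.sqrt (-3 * x ^ 2 + 4 * s * x + 4)) / 2 :=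
    funext hξ
  have hsq : Real.sqrt (3 + s ^ 2) ^ 2 = 3 + s ^ 2 := Real.sq_sqrt (by positivity)
  have hsqpos : 0 < Real.sqrt (3 + s ^ 2) := Real.sqrt_pos.2 (by positivity)
  have hη2s : 2 * s < 3 * η := by nlinarith
  have hg : 0 < -3 * η ^ 2 + 4 * s * η + 4 := by
    nlinarith [mul_pos (sub_pos.2 h1) (sub_pos.2 h2), sq_nonneg (s - 1),
      mul_pos hsqpos (sub_pos.2 h2)]
  have hgne : -3 * η ^ 2 + 4 * s * η + 4 ≠ 0 := ne_of_gt hg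
  have hF : HasDerivAt (fun x : ℝ => -3 * x ^ 2 + 4 * s * x + 4)
      (-6 * η + 4 * s) η := by
    have := (((hasDerivAt_pow 2 η).const_mul (-3 : ℝ)).add
      ((hasDerivAt_id η).const_mul (4 * s))).add_const 4
    convert this using 1
    · rfl
    · rfl
    · funext x; simp
    · simp; ring
  have hS : HasDerivAt (fun x : ℝ => Real.sqrt (-3 * x ^ 2 + 4 * s * x + 4))
      ((-6 * η + 4 * s) / (2 * Real.sqrt (-3 * η ^ 2 + 4 * s * η + 4))) η :=
    hF.sqrt hgne
  have hD : HasDerivAt ξ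
      ((-1 + (-6 * η + 4 * s) / (2 * Real.sqrt (-3 * η ^ 2 + 4 * s * η + 4))) / 2) η := by
    rw [hfun]
    have h0 : HasDerivAt (fun x : ℝ => -x + 2 * s) (-1) η := by
      simpa using ((hasDerivAt_id η).const_mul (-1 : ℝ)).add_const (2 * s)
    exact (h0.add hS).div_const 2
  refine ⟨hD.differentiableAt, ?_⟩
  rw [hD.deriv]
  have hsg : 0 < Real.sqrt (-3 * η ^ 2 + 4 * s * η + 4) := Real.sqrt_pos.2 hg
  have hneg : (-6 * η + 4 * s) / (2 * Real.sqrt (-3 * η ^ 2 + 4 * s * η + 4)) < 0 :=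
    div_neg_of_neg_of_pos (by linarith) (by linarith)
  linarith
end

section
/- Fix s ∈ (−1, 1]. The function η ↦ k²(η) = (3η² + (√(f_s(η)) − 6s)η + 2(s² − 1))/(2η√(f_s(η))) is strictly increasing on the open interval (β₀(s), β₁(s)), and 0 < k²(η) < 1 for every η ∈ (β₀(s), β₁(s)). -/
open Real

lemma aux_facts (s x : ℝ) (hs1 : -1 < s) (hs2 : s ≤ 1)
    (hx1 : (2 * s + Real.sqrt (3 + s ^ 2)) / 3 < x) (hx2 : x < 1 + s) :
    0 < x ∧ s < x ∧ 0 < -3 * x ^ 2 + 4 * s * x + 4 ∧ 0 < 3 * x ^ 2 - 4 * s * x + s ^ 2 - 1 := by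
  have h3 : Real.sqrt (3 + s ^ 2) ^ 2 = 3 + s ^ 2 := Real.sq_sqrt (by positivity)
  have hnn : 0 ≤ Real.sqrt (3 + s ^ 2) := Real.sqrt_nonneg _
  have hβ : Real.sqrt (3 + s ^ 2) < 3 * x - 2 * s := by linarith
  have habs1 : -2 * s ≤ Real.sqrt (3 + s ^ 2) := Real.le_sqrt_of_sq_le (by nlinarith)
  have habs2 : s ≤ Real.sqrt (3 + s ^ 2) := Real.le_sqrt_of_sq_le (by nlinarith)
  have hx0 : 0 < x := by linarith
  have hxs : s < x := by linarith
  have hquad : 0 < 3 * x ^ 2 - 4 * s * x + s ^ 2 - 1 := by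
    nlinarith [mul_pos (sub_pos.mpr hβ) (show (0:ℝ) < 3 * x - 2 * s + Real.sqrt (3 + s ^ 2) by linarith)]
  have h7 : 3 + s ≤ 2 * Real.sqrt (3 + s ^ 2) := by
    nlinarith [h3, hnn, sq_nonneg (s - 1), sq_nonneg (2 * Real.sqrt (3 + s ^ 2) - (3 + s))]
  have hf : 0 < -3 * x ^ 2 + 4 * s * x + 4 := by
    nlinarith [h3, hnn, hβ, h7, hx2]
  exact ⟨hx0, hxs, hf, hquad⟩

theorem stmt_5 (s : ℝ) (hs : s ∈ Set.Ioc (-1 : ℝ) 1)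
    (ksq : ℝ → ℝ)
    (hksq : ∀ η, ksq η =
      (3 * η ^ 2 + (Real.sqrt (-3 * η ^ 2 + 4 * s * η + 4) - 6 * s) * η + 2 * (s ^ 2 - 1)) /
        (2 * η * Real.sqrt (-3 * η ^ 2 + 4 * s * η + 4))) :
    StrictMonoOn ksq (Set.Ioo ((2 * s + Real.sqrt (3 + s ^ 2)) / 3) (1 + s)) ∧
      ∀ η ∈ Set.Ioo ((2 * s + Real.sqrt (3 + s ^ 2)) / 3) (1 + s),
        0 < ksq η ∧ ksq η < 1 := by
  obtain ⟨hs1, hs2⟩ := hs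
  have hfun : ksq = fun η => (3 * η ^ 2 + (Real.sqrt (-3 * η ^ 2 + 4 * s * η + 4) - 6 * s) * η + 2 * (s ^ 2 - 1)) /
        (2 * η * Real.sqrt (-3 * η ^ 2 + 4 * s * η + 4)) := funext hksq
  subst hfun
  constructor
  · apply strictMonoOn_of_deriv_pos (convex_Ioo _ _)
    · apply ContinuousOn.div
      · fun_prop
      · fun_prop
      · intro x hx
        obtain ⟨hx0, hxs, hf, hquad⟩ := aux_facts s x hs1 hs2 hx.1 hx.2
        have hwpos : 0 < Real.sqrt (-3 * x ^ 2 + 4 * s * x + 4) := Real.sqrt_pos.mpr hf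
        exact ne_of_gt (by positivity)
    · rw [interior_Ioo]
      intro x hx
      obtain ⟨hx0, hxs, hf, hquad⟩ := aux_facts s x hs1 hs2 hx.1 hx.2
      have hwpos : 0 < Real.sqrt (-3 * x ^ 2 + 4 * s * x + 4) := Real.sqrt_pos.mpr hf
      have hw2 : Real.sqrt (-3 * x ^ 2 + 4 * s * x + 4) ^ 2 = -3 * x ^ 2 + 4 * s * x + 4 :=
        Real.sq_sqrt hf.le
      have hwne : Real.sqrt (-3 * x ^ 2 + 4 * s * x + 4) ≠ 0 := ne_of_gt hwpos
      have hxne : x ≠ 0 := ne_of_gt hx0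
      have hder : HasDerivAt (fun η => (3 * η ^ 2 + (Real.sqrt (-3 * η ^ 2 + 4 * s * η + 4) - 6 * s) * η + 2 * (s ^ 2 - 1)) /
            (2 * η * Real.sqrt (-3 * η ^ 2 + 4 * s * η + 4)))
          ((8 - 8 * s ^ 2 + 12 * s * x - 12 * s ^ 3 * x + 24 * s ^ 2 * x ^ 2 - 12 * s * x ^ 3) /
            (2 * x ^ 2 * Real.sqrt (-3 * x ^ 2 + 4 * s * x + 4) ^ 3)) x := by
        have hc : HasDerivAt (fun η : ℝ => -3 * η ^ 2 + 4 * s * η + 4) (4 * s - 6 * x) x := by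
          have h := (((hasDerivAt_pow 2 x).const_mul (-3 : ℝ)).add
            ((hasDerivAt_id x).const_mul (4 * s))).add_const (4 : ℝ)
          refine h.congr_deriv ?_
          norm_num; ring
        have hw' := hc.sqrt (ne_of_gt hf)
        have hN := (((hasDerivAt_pow 2 x).const_mul (3 : ℝ)).add
          ((hw'.sub_const (6 * s)).mul (hasDerivAt_id x))).add_const (2 * (s ^ 2 - 1))
        have hD := ((hasDerivAt_id x).const_mul (2 : ℝ)).mul hw'
        have hDne : 2 * x * Real.sqrt (-3 * x ^ 2 + 4 * s * x + 4) ≠ 0 := by positivity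
        have h := hN.div hD hDne
        refine h.congr_deriv ?_
        simp only [id_eq, Pi.mul_apply, Pi.add_apply]; symm
        set W := Real.sqrt (-3 * x ^ 2 + 4 * s * x + 4) with hW
        field_simp
        linear_combination (norm := ring_nf) (4*s^2 - 4 - 6*x^2) * hw2
      rw [hder.deriv]
      apply div_pos
      · rcases le_or_gt s 0 with h | h
        · nlinarith [mul_nonneg (mul_nonneg (neg_nonneg.mpr h) hx0.le) (sq_nonneg (x - s)),
            mul_nonneg (neg_nonneg.mpr h) (by linarith [hx.2] : (0:ℝ) ≤ 1 + s - x),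
            mul_pos (by linarith : (0:ℝ) < 1 + s) (by linarith : (0:ℝ) < 2 + s)]
        · nlinarith [mul_pos (mul_pos (mul_pos h hx0) (by linarith [hx.2] : (0:ℝ) < 1 + s - x))
            (by linarith : (0:ℝ) < 1 + x - s),
            mul_nonneg (by linarith : (0:ℝ) ≤ 1 - s) (by linarith : (0:ℝ) ≤ 1 + s)]
      · positivity
  · intro x hx
    obtain ⟨hx0, hxs, hf, hquad⟩ := aux_facts s x hs1 hs2 hx.1 hx.2
    have hwpos : 0 < Real.sqrt (-3 * x ^ 2 + 4 * s * x + 4) := Real.sqrt_pos.mpr hf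
    have hw2 : Real.sqrt (-3 * x ^ 2 + 4 * s * x + 4) ^ 2 = -3 * x ^ 2 + 4 * s * x + 4 :=
      Real.sq_sqrt hf.le
    set w := Real.sqrt (-3 * x ^ 2 + 4 * s * x + 4) with hwdef
    have hQ : (3 * x ^ 2 - 6 * s * x + 2 * s ^ 2 - 2) ^ 2 < (x * w) ^ 2 := by
      have h1 : (0:ℝ) < 1 + s - x := by linarith [hx.2]
      have h2 : (0:ℝ) < x - s + 1 := by linarith
      nlinarith [mul_pos (mul_pos hquad h1) h2, hw2]
    have hxw : 0 < x * w := mul_pos hx0 hwpos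
    have habs := abs_lt_of_sq_lt_sq' hQ hxw.le
    constructor
    · apply div_pos
      · nlinarith [habs.1]
      · positivity
    · rw [div_lt_one (by positivity)]
      nlinarith [habs.2]
end

section
/- Fix s ∈ (−1, 1]. For every η ∈ (β₀(s), β₁(s)), the function η ↦ k²(η) has derivative at η equal to (η / b_s(η)^{3/2}) · (6sη · g_s(η) + 4(1 − s²)), where b_s(η) = η² f_s(η) and g_s(η) = −(η − (s − 1))(η − (s + 1)). -/
open Real

theorem stmt_6 (s : ℝ) (hs : s ∈ Set.Ioc (-1 : ℝ) 1)
    (ksq : ℝ → ℝ)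
    (hksq : ∀ η, ksq η =
      (3 * η ^ 2 + (Real.sqrt (-3 * η ^ 2 + 4 * s * η + 4) - 6 * s) * η + 2 * (s ^ 2 - 1)) /
        (2 * η * Real.sqrt (-3 * η ^ 2 + 4 * s * η + 4))) :
    ∀ η ∈ Set.Ioo ((2 * s + Real.sqrt (3 + s ^ 2)) / 3) (1 + s),
      HasDerivAt ksq
        (η / (η ^ 2 * (-3 * η ^ 2 + 4 * s * η + 4)) ^ ((3 : ℝ) / 2) *
          (6 * s * η * (-(η - (s - 1)) * (η - (s + 1))) + 4 * (1 - s ^ 2))) η := by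
  obtain ⟨hs1, hs2⟩ := hs
  intro η hη
  obtain ⟨h1, h2⟩ := hη
  have hs3 : (0:ℝ) < 3 + s ^ 2 := by nlinarith
  have hsq3 : Real.sqrt (3 + s ^ 2) ^ 2 = 3 + s ^ 2 := Real.sq_sqrt hs3.le
  have hsq3pos : 0 < Real.sqrt (3 + s ^ 2) := Real.sqrt_pos.mpr hs3
  have hη0 : 0 < η := by nlinarith [h1, hsq3, hsq3pos]
  have hu : 0 < -3 * η ^ 2 + 4 * s * η + 4 := by nlinarith [h1, h2, hsq3, hsq3pos]
  set u : ℝ := -3 * η ^ 2 + 4 * s * η + 4 with hu_def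
  set q : ℝ := Real.sqrt u with hq_def
  have hq0 : 0 < q := Real.sqrt_pos.mpr hu
  have hq2 : q ^ 2 = u := Real.sq_sqrt hu.le
  -- derivative of inner polynomial
  have hU : HasDerivAt (fun x : ℝ => -3 * x ^ 2 + 4 * s * x + 4) (-6 * η + 4 * s) η := by
    have h := (((hasDerivAt_pow 2 η).const_mul (-3:ℝ)).add
      ((hasDerivAt_id' η).const_mul (4*s))).add_const 4
    refine h.congr_deriv ?_
    ring
  have hsqrt : HasDerivAt (fun x : ℝ => Real.sqrt (-3 * x ^ 2 + 4 * s * x + 4))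
      ((-6 * η + 4 * s) / (2 * q)) η := hU.sqrt hu.ne'
  have hN : HasDerivAt (fun x : ℝ =>
      3 * x ^ 2 + (Real.sqrt (-3 * x ^ 2 + 4 * s * x + 4) - 6 * s) * x + 2 * (s ^ 2 - 1))
      (3 * (2 * η) + (((-6 * η + 4 * s) / (2 * q)) * η + (q - 6 * s) * 1)) η := by
    have h := (((hasDerivAt_pow 2 η).const_mul (3:ℝ)).add
      ((hsqrt.sub_const (6*s)).mul (hasDerivAt_id' η))).add_const (2 * (s ^ 2 - 1))
    refine h.congr_deriv ?_
    ring
  have hD : HasDerivAt (fun x : ℝ => 2 * x * Real.sqrt (-3 * x ^ 2 + 4 * s * x + 4))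
      (2 * 1 * q + 2 * η * ((-6 * η + 4 * s) / (2 * q))) η := by
    have h := ((hasDerivAt_id' η).const_mul (2:ℝ)).mul hsqrt
    exact h.congr_deriv rfl
  have hDne : 2 * η * q ≠ 0 := by positivity
  have hdiv := hN.div hD hDne
  have hfun : ksq = fun x : ℝ =>
      (3 * x ^ 2 + (Real.sqrt (-3 * x ^ 2 + 4 * s * x + 4) - 6 * s) * x + 2 * (s ^ 2 - 1)) /
        (2 * x * Real.sqrt (-3 * x ^ 2 + 4 * s * x + 4)) := funext hksq
  rw [hfun]
  refine hdiv.congr_deriv ?_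
  symm
  -- now the algebraic identity
  have hrpow : (η ^ 2 * u) ^ ((3:ℝ) / 2) = η ^ 3 * u * q := by
    have hx : (0:ℝ) < η ^ 2 * u := by positivity
    rw [show ((3:ℝ)/2) = (1:ℝ) + (1/2:ℝ) by norm_num, Real.rpow_add hx, Real.rpow_one,
      ← Real.sqrt_eq_rpow, Real.sqrt_mul (sq_nonneg η), Real.sqrt_sq hη0.le]
    ring
  have hfold : Real.sqrt (-3 * η ^ 2 + 4 * s * η + 4) = q := rfl
  rw [hrpow, hfold, show u = q ^ 2 from hq2.symm]
  have hq2' : q ^ 2 = -3 * η ^ 2 + 4 * s * η + 4 := hq2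
  field_simp
  ring_nf
  linear_combination (-6 * η ^ 2 + 4 * s ^ 2 - 4) * hq2'
end

section
/- Fix s ∈ (−1, 1] and set g_s(η) = −(η − (s − 1))(η − (s + 1)). Then for every η ∈ (β₀(s), β₁(s)), one has 6sη · g_s(η) + 4(1 − s²) > 0. -/
open Real

theorem stmt_7 (s : ℝ) (hs : s ∈ Set.Ioc (-1 : ℝ) 1) :
    ∀ η ∈ Set.Ioo ((2 * s + Real.sqrt (3 + s ^ 2)) / 3) (1 + s),
      6 * s * η * (-(η - (s - 1)) * (η - (s + 1))) + 4 * (1 - s ^ 2) > 0 := by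
  obtain ⟨hs1, hs2⟩ := hs
  rintro η ⟨h1, h2⟩
  set r := Real.sqrt (3 + s ^ 2) with hr
  have hr0 : 0 ≤ r := Real.sqrt_nonneg _
  have hr2 : r ^ 2 = 3 + s ^ 2 := Real.sq_sqrt (by positivity)
  have hrs : r > s := by nlinarith
  have hrs' : r > -s := by nlinarith
  have hηs : η > s := by linarith [h1, hrs]
  have hηpos : η > 0 := by
    have : 2 * s + r > 0 := by nlinarith
    linarith
  have hlow : η > s - 1 := by linarith
  have hg : (η - (s - 1)) * ((s + 1) - η) > 0 :=
    mul_pos (by linarith) (by linarith)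
  have hgeq : -(η - (s - 1)) * (η - (s + 1)) = 1 - (η - s) ^ 2 := by ring
  rw [hgeq]
  have hgpos : 1 - (η - s) ^ 2 > 0 := by nlinarith
  rcases le_or_gt 0 s with hs0 | hs0
  · -- s ≥ 0 : both terms nonneg, not both zero
    rcases eq_or_lt_of_le hs2 with h | h
    · have : s = 1 := h
      subst this
      nlinarith
    · have t1 : 6 * s * η * (1 - (η - s) ^ 2) ≥ 0 := by positivity
      nlinarith
  · -- s < 0
    have hA : (-s) * η < (-s) * (1 + s) := by
      apply mul_lt_mul_of_pos_left h2 (by linarith)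
    have hηs3 : 3 * (η - s) > r - s := by linarith
    have hB : 9 * (1 - (η - s) ^ 2) < 6 - 2 * s ^ 2 + 2 * s * r := by
      nlinarith [hηs3, hrs]
    -- product bound: (-s)η(1-(η-s)²) < (-s)(1+s)(6-2s²+2sr)/9
    have hApos : 0 < (-s) * η := mul_pos (by linarith) hηpos
    have hBpos : 0 < 1 - (η - s) ^ 2 := hgpos
    have hA'pos : 0 < (-s) * (1 + s) := mul_pos (by linarith) (by linarith)
    have hprod : ((-s) * η) * (1 - (η - s) ^ 2)
        < ((-s) * (1 + s)) * ((6 - 2 * s ^ 2 + 2 * s * r) / 9) := by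
      have := mul_lt_mul'' hA (show (1 - (η - s) ^ 2) < (6 - 2 * s ^ 2 + 2 * s * r) / 9 by
        linarith) hApos.le hBpos.le
      linarith
    have hfin : 6 * (((-s) * (1 + s)) * ((6 - 2 * s ^ 2 + 2 * s * r) / 9)) ≤ 4 * (1 - s ^ 2) := by
      have hkey : s ^ 3 - s ^ 2 * r ≤ 3 := by nlinarith [mul_nonneg (sq_nonneg s) hr0]
      nlinarith [mul_le_mul_of_nonneg_left hkey (show (0:ℝ) ≤ 1 + s by linarith)]
    nlinarith [hprod, hfin]
end

section
/- Define h(s) = (4/9)(−s⁴ + s(3 + s²)^{3/2} + 9). Then h is strictly increasing on the interval [−1, 0], h(−1) = 0, and h(0) = 4. -/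
open Real

private lemma pos3 (s : ℝ) : (0:ℝ) < 3 + s ^ 2 := by positivity

private lemma hderiv (h : ℝ → ℝ)
    (hh : ∀ s, h s = 4 / 9 * (-s ^ 4 + s * (3 + s ^ 2) ^ ((3 : ℝ) / 2) + 9)) (s : ℝ) :
    HasDerivAt h (4 / 9 * (-(4 * s ^ 3) +
      (s * ((3:ℝ)/2 * (3 + s ^ 2) ^ ((1:ℝ)/2) * (2 * s)) + (3 + s ^ 2) ^ ((3:ℝ)/2)))) s := by
  have hbase : HasDerivAt (fun x : ℝ => 3 + x ^ 2) (2 * s) s := by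
    simpa using (hasDerivAt_pow 2 s).const_add 3
  have hrpow : HasDerivAt (fun x : ℝ => (3 + x ^ 2) ^ ((3:ℝ)/2))
      ((3:ℝ)/2 * (3 + s ^ 2) ^ ((1:ℝ)/2) * (2 * s)) s := by
    have H := (Real.hasDerivAt_rpow_const (x := 3 + s ^ 2) (p := (3:ℝ)/2)
      (Or.inl (ne_of_gt (pos3 s)))).comp s hbase
    exact H.congr_deriv (by norm_num)
  have hpow : HasDerivAt (fun x : ℝ => -x ^ 4) (-(4 * s ^ 3)) s := by
    exact ((hasDerivAt_pow 4 s).neg).congr_deriv (by norm_num)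
  have hmul : HasDerivAt (fun x : ℝ => x * (3 + x ^ 2) ^ ((3:ℝ)/2))
      ((3 + s ^ 2) ^ ((3:ℝ)/2) + s * ((3:ℝ)/2 * (3 + s ^ 2) ^ ((1:ℝ)/2) * (2 * s))) s := by
    exact ((hasDerivAt_id s).mul hrpow).congr_deriv (by simp only [one_mul, id_eq])
  have := ((hpow.add hmul).add_const 9).const_mul (4/9 : ℝ)
  have hfun : h = fun x => 4 / 9 * (-x ^ 4 + x * (3 + x ^ 2) ^ ((3:ℝ)/2) + 9) :=
    funext hh
  rw [hfun]
  exact this.congr_deriv (by ring)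

theorem stmt_8 (h : ℝ → ℝ)
    (hh : ∀ s, h s = 4 / 9 * (-s ^ 4 + s * (3 + s ^ 2) ^ ((3 : ℝ) / 2) + 9)) :
    StrictMonoOn h (Set.Icc (-1 : ℝ) 0) ∧ h (-1) = 0 ∧ h 0 = 4 := by
  refine ⟨?_, ?_, ?_⟩
  · apply strictMonoOn_of_deriv_pos (convex_Icc _ _)
    · exact Continuous.continuousOn (by
        exact continuous_iff_continuousAt.2 fun x => (hderiv h hh x).continuousAt)
    · intro x hx
      rw [interior_Icc, Set.mem_Ioo] at hx
      rw [(hderiv h hh x).deriv]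
      have h1 : 0 ≤ -(4 * x ^ 3) := by
        nlinarith [mul_nonneg (sq_nonneg x) (neg_nonneg.2 (le_of_lt hx.2))]
      have h2 : 0 ≤ x * ((3:ℝ)/2 * (3 + x ^ 2) ^ ((1:ℝ)/2) * (2 * x)) := by
        have := Real.rpow_nonneg (le_of_lt (pos3 x)) ((1:ℝ)/2)
        nlinarith [sq_nonneg x]
      have h3 : 0 < (3 + x ^ 2) ^ ((3:ℝ)/2) := Real.rpow_pos_of_pos (pos3 x) _
      positivity
  · rw [hh]
    have h4 : ((3:ℝ) + (-1:ℝ) ^ 2) ^ ((3:ℝ)/2) = 8 := by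
      rw [show ((3:ℝ) + (-1:ℝ) ^ 2) = (2:ℝ) ^ (2:ℕ) from by norm_num,
        ← Real.rpow_natCast (2:ℝ) 2, ← Real.rpow_mul (by norm_num : (0:ℝ) ≤ 2),
        show ((2:ℕ):ℝ) * ((3:ℝ)/2) = ((3:ℕ):ℝ) from by norm_num,
        Real.rpow_natCast]
      norm_num
    rw [h4]
    norm_num
  · rw [hh]; norm_num
end

section
/- Let (ω, c) ∈ ℝ² satisfy ω > c²/4. Then, as η₃ tends to α₁ from the left within (α₀, α₁): m(η₃)² tends to 1, and −η₃ m(η₃)²/η₁(η₃) tends to (2√ω + c)/(2√ω − c). -/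
open Real Filter

theorem stmt_9 (ω c : ℝ) (hWC : ω > c ^ 2 / 4)
    (α₀ α₁ : ℝ)
    (hα₀ : α₀ = (4 * c + Real.sqrt (48 * ω + 4 * c ^ 2)) / 3)
    (hα₁ : α₁ = 4 * Real.sqrt ω + 2 * c)
    (η₁ η₂ m : ℝ → ℝ)
    (hη₁ : ∀ t, η₁ t = (-t + 4 * c - Real.sqrt (64 * ω - 3 * t ^ 2 + 8 * c * t)) / 2)
    (hη₂ : ∀ t, η₂ t = (-t + 4 * c + Real.sqrt (64 * ω - 3 * t ^ 2 + 8 * c * t)) / 2)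
    (hm : ∀ t, m t = Real.sqrt ((-η₁ t) * (t - η₂ t) / (t * (η₂ t - η₁ t)))) :
    Tendsto (fun t => m t ^ 2) (nhdsWithin α₁ (Set.Ioo α₀ α₁)) (nhds 1) ∧
    Tendsto (fun t => -t * m t ^ 2 / η₁ t) (nhdsWithin α₁ (Set.Ioo α₀ α₁))
      (nhds ((2 * Real.sqrt ω + c) / (2 * Real.sqrt ω - c))) := by
  set s := Real.sqrt ω with hsdef
  have hω0 : (0:ℝ) ≤ ω := le_of_lt (lt_of_le_of_lt (by positivity) hWC)
  have hs0 : 0 ≤ s := Real.sqrt_nonneg ω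
  have hs2 : s ^ 2 = ω := Real.sq_sqrt hω0
  have hclt : c < 2 * s := by nlinarith
  have hcgt : -c < 2 * s := by nlinarith
  set f : ℝ → ℝ := fun t => Real.sqrt (64 * ω - 3 * t ^ 2 + 8 * c * t) with hfdef
  have hfα : Real.sqrt (64 * ω - 3 * α₁ ^ 2 + 8 * c * α₁) = 4 * s - 2 * c := by
    rw [hα₁]
    rw [show 64 * ω - 3 * (4 * s + 2 * c) ^ 2 + 8 * c * (4 * s + 2 * c)
        = (4 * s - 2 * c) ^ 2 by nlinarith]
    exact Real.sqrt_sq (by linarith)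
  -- g : the expression inside the sqrt of m
  set g : ℝ → ℝ := fun t => (-η₁ t) * (t - η₂ t) / (t * (η₂ t - η₁ t)) with hgdef
  have hη₁α : η₁ α₁ = -(4 * s - 2 * c) := by
    rw [hη₁, hfα, hα₁]; ring
  have hη₂α : η₂ α₁ = 0 := by
    rw [hη₂, hfα, hα₁]; ring
  have hα₁0 : α₁ ≠ 0 := by rw [hα₁]; nlinarith
  have hcontf : Continuous f := by
    apply Real.continuous_sqrt.comp
    fun_prop
  have hcontη₁ : Continuous η₁ := by
    have : η₁ = fun t => (-t + 4 * c - f t) / 2 := funext hη₁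
    rw [this]; fun_prop
  have hcontη₂ : Continuous η₂ := by
    have : η₂ = fun t => (-t + 4 * c + f t) / 2 := funext hη₂
    rw [this]; fun_prop
  have hdenα : α₁ * (η₂ α₁ - η₁ α₁) ≠ 0 := by
    rw [hη₂α, hη₁α, hα₁]; nlinarith
  have hgcont : ContinuousAt g α₁ := by
    apply ContinuousAt.div
    · exact (hcontη₁.neg.mul (continuous_id.sub hcontη₂)).continuousAt
    · exact (continuous_id.mul (hcontη₂.sub hcontη₁)).continuousAt
    · exact hdenα
  have hgα : g α₁ = 1 := by
    show -η₁ α₁ * (α₁ - η₂ α₁) / (α₁ * (η₂ α₁ - η₁ α₁)) = 1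
    rw [hη₁α, hη₂α, hα₁, div_eq_one_iff_eq (ne_of_gt (by nlinarith))]
    ring
  have hg : Tendsto g (nhdsWithin α₁ (Set.Ioo α₀ α₁)) (nhds 1) := by
    rw [← hgα]
    exact hgcont.continuousWithinAt.tendsto
  have hpos : ∀ᶠ t in nhdsWithin α₁ (Set.Ioo α₀ α₁), 0 < g t :=
    hg.eventually (eventually_gt_nhds zero_lt_one)
  have hmsq : ∀ᶠ t in nhdsWithin α₁ (Set.Ioo α₀ α₁), g t = m t ^ 2 := by
    filter_upwards [hpos] with t ht
    rw [hm]; rw [Real.sq_sqrt ht.le]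
  constructor
  · exact hg.congr' hmsq
  · have hη₁ne : η₁ α₁ ≠ 0 := by rw [hη₁α]; intro h; nlinarith [neg_eq_zero.mp h]
    have h2 : Tendsto (fun t => -t * g t / η₁ t) (nhdsWithin α₁ (Set.Ioo α₀ α₁))
        (nhds (-α₁ * g α₁ / η₁ α₁)) := by
      apply ContinuousAt.continuousWithinAt
      exact ((continuous_neg.continuousAt).mul hgcont).div hcontη₁.continuousAt hη₁ne
    have hval : -α₁ * g α₁ / η₁ α₁ = (2 * s + c) / (2 * s - c) := by
      rw [hgα, hη₁α, hα₁]
      rw [div_eq_div_iff (by nlinarith) (by nlinarith)]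
      ring
    rw [hval] at h2
    exact h2.congr' (hmsq.mono fun t ht => by rw [ht])
end

section
/- Let ω = c²/4 with c > 0. Then: (i) for s = 1 and every η ∈ (4/3, 2), the identity k²(η) = 1/2 − (3/2)·√(2 − η)/√(3η + 2) holds; (ii) as η₃ tends to α₁ from the left within (α₀, α₁), m(η₃)² tends to 1/2 and −η₃ m(η₃)²/η₁(η₃) tends to +∞. -/
open Real Filter

theorem stmt_10 (ω c : ℝ) (hω : ω = c ^ 2 / 4) (hc : c > 0)
    (α₀ α₁ : ℝ)
    (hα₀ : α₀ = (4 * c + Real.sqrt (48 * ω + 4 * c ^ 2)) / 3)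
    (hα₁ : α₁ = 4 * Real.sqrt ω + 2 * c)
    (η₁ η₂ m : ℝ → ℝ)
    (hη₁ : ∀ t, η₁ t = (-t + 4 * c - Real.sqrt (64 * ω - 3 * t ^ 2 + 8 * c * t)) / 2)
    (hη₂ : ∀ t, η₂ t = (-t + 4 * c + Real.sqrt (64 * ω - 3 * t ^ 2 + 8 * c * t)) / 2)
    (hm : ∀ t, m t = Real.sqrt ((-η₁ t) * (t - η₂ t) / (t * (η₂ t - η₁ t))))
    (ksq : ℝ → ℝ)
    (hksq : ∀ η, ksq η =
      (3 * η ^ 2 + (Real.sqrt (-3 * η ^ 2 + 4 * 1 * η + 4) - 6 * 1) * η + 2 * ((1 : ℝ) ^ 2 - 1)) /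
        (2 * η * Real.sqrt (-3 * η ^ 2 + 4 * 1 * η + 4))) :
    (∀ η ∈ Set.Ioo ((4 : ℝ) / 3) 2,
        ksq η = 1 / 2 - 3 / 2 * (Real.sqrt (2 - η) / Real.sqrt (3 * η + 2))) ∧
    Tendsto (fun t => m t ^ 2) (nhdsWithin α₁ (Set.Ioo α₀ α₁)) (nhds (1 / 2)) ∧
    Tendsto (fun t => -t * m t ^ 2 / η₁ t) (nhdsWithin α₁ (Set.Ioo α₀ α₁)) atTop := by
  subst hω
  have hα₁' : α₁ = 4 * c := by
    rw [hα₁, show c^2/4 = (c/2)^2 by ring, Real.sqrt_sq (by linarith)]; ring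
  have hα₀' : α₀ = 8 * c / 3 := by
    rw [hα₀, show 48*(c^2/4)+4*c^2 = (4*c)^2 by ring, Real.sqrt_sq (by linarith)]; ring
  rw [hα₀', hα₁']
  refine ⟨?_, ?_⟩
  · -- part (i)
    intro η hη
    obtain ⟨h1, h2⟩ := hη
    have hηpos : (0:ℝ) < η := by linarith
    have ha : (0:ℝ) < 2 - η := by linarith
    have hb : (0:ℝ) < 3*η + 2 := by linarith
    have hs : Real.sqrt (-3*η^2 + 4*1*η + 4) = Real.sqrt (2-η) * Real.sqrt (3*η+2) := by
      rw [show -3*η^2 + 4*1*η + 4 = (2-η)*(3*η+2) by ring, Real.sqrt_mul ha.le]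
    set a := Real.sqrt (2-η) with hadef
    set b := Real.sqrt (3*η+2) with hbdef
    have ha2 : a^2 = 2-η := Real.sq_sqrt ha.le
    have hb2 : b^2 = 3*η+2 := Real.sq_sqrt hb.le
    have hapos : 0 < a := Real.sqrt_pos.mpr ha
    have hbpos : 0 < b := Real.sqrt_pos.mpr hb
    rw [hksq, hs]
    field_simp
    nlinarith [ha2, hb2, mul_pos hηpos hbpos, mul_pos (mul_pos hηpos hbpos) hapos]
  -- part (ii)
  set l := nhdsWithin (4*c) (Set.Ioo (8*c/3) (4*c)) with hl
  set g : ℝ → ℝ := fun t => (Real.sqrt (3*t+4*c) - Real.sqrt (4*c-t)) *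
      (3*t - 4*c - Real.sqrt (4*c-t) * Real.sqrt (3*t+4*c)) / (4*t*Real.sqrt (3*t+4*c)) with hg
  have hAfac : ∀ t : ℝ, 64 * (c^2/4) - 3 * t ^ 2 + 8 * c * t = (4*c-t)*(3*t+4*c) := by
    intro t; ring
  have key : ∀ t ∈ Set.Ioo (8*c/3) (4*c), m t ^ 2 = g t ∧ 0 < -η₁ t ∧ 0 ≤ g t := by
    intro t ht
    obtain ⟨ht1, ht2⟩ := ht
    have htpos : 0 < t := by linarith
    have hu : (0:ℝ) < 4*c - t := by linarith
    have hp : (0:ℝ) < 3*t + 4*c := by linarith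
    set q := Real.sqrt (4*c-t) with hqdef
    set p := Real.sqrt (3*t+4*c) with hpdef
    have hq2 : q^2 = 4*c-t := Real.sq_sqrt hu.le
    have hp2 : p^2 = 3*t+4*c := Real.sq_sqrt hp.le
    have hqpos : 0 < q := Real.sqrt_pos.mpr hu
    have hppos : 0 < p := Real.sqrt_pos.mpr hp
    have hsA : Real.sqrt (64 * (c^2/4) - 3 * t ^ 2 + 8 * c * t) = q * p := by
      rw [hAfac t, Real.sqrt_mul hu.le]
    have hpq : q < p := by nlinarith
    have hmid : q * p ≤ 3*t - 4*c := by nlinarith [mul_pos hqpos hppos]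
    have hgnn : 0 ≤ g t := by
      apply div_nonneg
      · apply mul_nonneg (by linarith) (by linarith)
      · positivity
    have alg : ∀ q p : ℝ, 0 < q → 0 < p → q^2 = 4*c - t →
        (-((-t + 4*c - q*p)/2)) * (t - (-t + 4*c + q*p)/2) /
            (t * ((-t + 4*c + q*p)/2 - (-t + 4*c - q*p)/2))
          = (p - q) * (3*t - 4*c - q*p) / (4*t*p) := by
      intro q p hq0 hp0 hq2
      field_simp
      ring_nf
      linear_combination (4*p*(3*t-4*c-q*p)) * hq2
    refine ⟨?_, ?_, hgnn⟩
    · rw [hm t]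
      rw [show (-η₁ t) * (t - η₂ t) / (t * (η₂ t - η₁ t)) = g t by
        rw [hη₁ t, hη₂ t, hsA, hg]
        simp only
        rw [← hqdef, ← hpdef]
        exact alg q p hqpos hppos hq2]
      exact Real.sq_sqrt hgnn
    · rw [hη₁ t, hsA]
      nlinarith [mul_pos hqpos hppos]
  have hsqc : (0:ℝ) < Real.sqrt (3*(4*c)+4*c) := Real.sqrt_pos.mpr (by linarith)
  have hgval : g (4*c) = 1/2 := by
    rw [hg]
    simp only
    rw [show 4*c - 4*c = (0:ℝ) by ring, Real.sqrt_zero]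
    field_simp
    ring
  have hgcont : ContinuousAt g (4*c) := by
    apply ContinuousAt.div
    · fun_prop
    · fun_prop
    · positivity
  have hmem : ∀ᶠ t in l, t ∈ Set.Ioo (8*c/3) (4*c) := eventually_mem_nhdsWithin
  have hgl : Tendsto g l (nhds (1/2)) := by
    rw [← hgval]
    exact (hgcont.tendsto).mono_left nhdsWithin_le_nhds
  have hm2 : Tendsto (fun t => m t ^ 2) l (nhds (1/2)) :=
    hgl.congr' (hmem.mono fun t ht => ((key t ht).1).symm)
  refine ⟨hm2, ?_⟩
  have hηlim : Tendsto (fun t => -η₁ t) l (nhdsWithin 0 (Set.Ioi 0)) := by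
    rw [tendsto_nhdsWithin_iff]
    constructor
    · have hcont : Tendsto (fun t => -((-t + 4 * c - Real.sqrt (64 * (c^2/4) - 3 * t ^ 2 + 8 * c * t)) / 2)) (nhds (4*c)) (nhds 0) := by
        have h0 : -((-(4*c) + 4 * c - Real.sqrt (64 * (c^2/4) - 3 * (4*c) ^ 2 + 8 * c * (4*c))) / 2) = 0 := by
          rw [show 64 * (c^2/4) - 3 * (4*c) ^ 2 + 8 * c * (4*c) = (0:ℝ) by ring, Real.sqrt_zero]
          ring
        rw [← h0]
        apply ContinuousAt.tendsto
        fun_prop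
      refine (hcont.mono_left nhdsWithin_le_nhds).congr fun t => by rw [hη₁ t]
    · exact hmem.mono fun t ht => (key t ht).2.1
  have hinv : Tendsto (fun t => (-η₁ t)⁻¹) l atTop := hηlim.inv_tendsto_nhdsGT_zero
  have htid : Tendsto (fun t : ℝ => t) l (nhds (4*c)) :=
    tendsto_id.mono_left nhdsWithin_le_nhds
  have h2 : Tendsto (fun t => t * (-η₁ t)⁻¹) l atTop :=
    Tendsto.pos_mul_atTop (by linarith) htid hinv
  have h3 : Tendsto (fun t => m t ^ 2 * (t * (-η₁ t)⁻¹)) l atTop :=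
    Tendsto.pos_mul_atTop (by norm_num) hm2 h2
  refine h3.congr' (hmem.mono fun t ht => ?_)
  have hne : η₁ t ≠ 0 := by have := (key t ht).2.1; intro h; rw [h] at this; simp at this
  simp only
  rw [inv_neg, div_eq_mul_inv]
  ring
end

section
/- Let (ω, c) ∈ ℝ² satisfy condition (WC). Then, as η₃ tends to α₀ from the right within (α₀, α₁), T(η₃) tends to T₀(ω, c) = 4π / √(α₀ √(A(α₀))). -/
set_option maxHeartbeats 1000000


open Real Filter

lemma K_bounds_aux (κ : ℝ) (hκ : κ ^ 2 ≤ 1/2) :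
    Real.pi/2 ≤ (∫ θ in (0:ℝ)..(Real.pi/2), 1 / Real.sqrt (1 - κ^2 * Real.sin θ ^ 2)) ∧
    (∫ θ in (0:ℝ)..(Real.pi/2), 1 / Real.sqrt (1 - κ^2 * Real.sin θ ^ 2)) ≤
      Real.pi/2 * (1 / Real.sqrt (1 - κ^2)) := by
  have hpos : ∀ θ : ℝ, 0 < 1 - κ^2 * Real.sin θ ^ 2 := by
    intro θ
    nlinarith [Real.sin_sq_le_one θ, sq_nonneg (Real.sin θ), sq_nonneg κ]
  have hc : Continuous (fun θ : ℝ => 1 / Real.sqrt (1 - κ^2 * Real.sin θ ^ 2)) := by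
    apply continuous_const.div
    · exact Real.continuous_sqrt.comp (by continuity)
    · exact fun θ => (Real.sqrt_pos.2 (hpos θ)).ne'
  have hint : IntervalIntegrable (fun θ : ℝ => 1 / Real.sqrt (1 - κ^2 * Real.sin θ ^ 2))
      MeasureTheory.volume 0 (Real.pi/2) := hc.intervalIntegrable 0 (Real.pi/2)
  have hπ : (0:ℝ) ≤ Real.pi/2 := by positivity
  constructor
  · have h1 : ∀ θ ∈ Set.Icc (0:ℝ) (Real.pi/2),
        (1:ℝ) ≤ 1 / Real.sqrt (1 - κ^2 * Real.sin θ ^ 2) := by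
      intro θ _
      apply one_le_one_div (Real.sqrt_pos.2 (hpos θ))
      calc Real.sqrt (1 - κ^2 * Real.sin θ ^ 2) ≤ Real.sqrt 1 :=
            Real.sqrt_le_sqrt (by nlinarith [sq_nonneg (Real.sin θ), sq_nonneg κ])
        _ = 1 := Real.sqrt_one
    have := intervalIntegral.integral_mono_on hπ intervalIntegrable_const hint h1
    simpa using this
  · have h2 : ∀ θ ∈ Set.Icc (0:ℝ) (Real.pi/2),
        1 / Real.sqrt (1 - κ^2 * Real.sin θ ^ 2) ≤ 1 / Real.sqrt (1 - κ^2) := by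
      intro θ _
      apply one_div_le_one_div_of_le
      · exact Real.sqrt_pos.2 (by nlinarith)
      · exact Real.sqrt_le_sqrt (by nlinarith [Real.sin_sq_le_one θ, sq_nonneg κ])
    have := intervalIntegral.integral_mono_on hπ hint intervalIntegrable_const h2
    simpa [mul_comm] using this

theorem stmt_12 (ω c : ℝ) (hWC : ω > c ^ 2 / 4 ∨ (ω = c ^ 2 / 4 ∧ c > 0))
    (α₀ α₁ : ℝ)
    (hα₀ : α₀ = (4 * c + Real.sqrt (48 * ω + 4 * c ^ 2)) / 3)
    (hα₁ : α₁ = 4 * Real.sqrt ω + 2 * c)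
    (η₁ η₂ m : ℝ → ℝ)
    (hη₁ : ∀ t, η₁ t = (-t + 4 * c - Real.sqrt (64 * ω - 3 * t ^ 2 + 8 * c * t)) / 2)
    (hη₂ : ∀ t, η₂ t = (-t + 4 * c + Real.sqrt (64 * ω - 3 * t ^ 2 + 8 * c * t)) / 2)
    (hm : ∀ t, m t = Real.sqrt ((-η₁ t) * (t - η₂ t) / (t * (η₂ t - η₁ t))))
    (K T : ℝ → ℝ)
    (hK : ∀ κ, K κ = ∫ θ in (0 : ℝ)..(Real.pi / 2),
      1 / Real.sqrt (1 - κ ^ 2 * Real.sin θ ^ 2))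
    (hT : ∀ t, T t = 8 * K (m t) /
      Real.sqrt (t * Real.sqrt (64 * ω - 3 * t ^ 2 + 8 * c * t))) :
    Tendsto T (nhdsWithin α₀ (Set.Ioo α₀ α₁))
      (nhds (4 * Real.pi / Real.sqrt (α₀ * Real.sqrt (64 * ω - 3 * α₀ ^ 2 + 8 * c * α₀)))) := by
  have hω : 0 < ω := by rcases hWC with h | ⟨h, hc⟩ <;> nlinarith [sq_nonneg c]
  set s := Real.sqrt (48 * ω + 4 * c ^ 2) with hs
  have hsnn : 0 ≤ s := Real.sqrt_nonneg _
  have hs2 : s ^ 2 = 48 * ω + 4 * c ^ 2 := Real.sq_sqrt (by nlinarith [sq_nonneg c])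
  have hspos : 0 < s := by nlinarith
  have hscpos : 0 < 4 * c + s := by
    rcases hWC with h | ⟨h, hc⟩ <;> nlinarith
  have h3α : 3 * α₀ = 4 * c + s := by rw [hα₀]; ring
  have hα0pos : 0 < α₀ := by linarith
  have hA : 64 * ω - 3 * α₀ ^ 2 + 8 * c * α₀ = s ^ 2 := by nlinarith [h3α, hs2]
  have hsA : Real.sqrt (64 * ω - 3 * α₀ ^ 2 + 8 * c * α₀) = s := by
    rw [hA]; exact Real.sqrt_sq hsnn
  set l := nhdsWithin α₀ (Set.Ioo α₀ α₁) with hl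
  -- F t = sqrt (A t)
  have hFcont : Continuous (fun t : ℝ => Real.sqrt (64 * ω - 3 * t ^ 2 + 8 * c * t)) :=
    Real.continuous_sqrt.comp (by continuity)
  have hFt : Tendsto (fun t : ℝ => Real.sqrt (64 * ω - 3 * t ^ 2 + 8 * c * t)) l (nhds s) := by
    have h0 : Tendsto (fun t : ℝ => Real.sqrt (64 * ω - 3 * t ^ 2 + 8 * c * t)) l
        (nhds (Real.sqrt (64 * ω - 3 * α₀ ^ 2 + 8 * c * α₀))) :=
      (hFcont.tendsto α₀).mono_left nhdsWithin_le_nhds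
    rwa [hsA] at h0
  have htid : Tendsto (fun t : ℝ => t) l (nhds α₀) :=
    (continuous_id.tendsto α₀).mono_left nhdsWithin_le_nhds
  have hη₁f : η₁ = fun t => (-t + 4 * c - Real.sqrt (64 * ω - 3 * t ^ 2 + 8 * c * t)) / 2 :=
    funext hη₁
  have hη₂f : η₂ = fun t => (-t + 4 * c + Real.sqrt (64 * ω - 3 * t ^ 2 + 8 * c * t)) / 2 :=
    funext hη₂
  have hη₁t : Tendsto η₁ l (nhds ((-α₀ + 4 * c - s) / 2)) := by
    rw [hη₁f]
    exact (((htid.neg.add_const (4 * c)).sub hFt).div_const 2)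
  have hη₂t : Tendsto η₂ l (nhds α₀) := by
    rw [hη₂f]
    have : Tendsto (fun t : ℝ => (-t + 4 * c + Real.sqrt (64 * ω - 3 * t ^ 2 + 8 * c * t)) / 2)
        l (nhds ((-α₀ + 4 * c + s) / 2)) :=
      (((htid.neg.add_const (4 * c)).add hFt).div_const 2)
    rwa [show (-α₀ + 4 * c + s) / 2 = α₀ by linarith] at this
  have hden_ne : α₀ * (α₀ - (-α₀ + 4 * c - s) / 2) ≠ 0 := by
    have : α₀ - (-α₀ + 4 * c - s) / 2 = s := by linarith
    rw [this]
    positivity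
  have hinn : Tendsto (fun t => (-η₁ t) * (t - η₂ t) / (t * (η₂ t - η₁ t))) l (nhds 0) := by
    have hnum : Tendsto (fun t => (-η₁ t) * (t - η₂ t)) l
        (nhds ((-((-α₀ + 4 * c - s) / 2)) * (α₀ - α₀))) := hη₁t.neg.mul (htid.sub hη₂t)
    have hdenom : Tendsto (fun t => t * (η₂ t - η₁ t)) l
        (nhds (α₀ * (α₀ - (-α₀ + 4 * c - s) / 2))) := htid.mul (hη₂t.sub hη₁t)
    have := hnum.div hdenom hden_ne
    simp only [sub_self, mul_zero, zero_div] at this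
    exact this
  have hmt : Tendsto m l (nhds 0) := by
    have : Tendsto (fun t => Real.sqrt ((-η₁ t) * (t - η₂ t) / (t * (η₂ t - η₁ t)))) l
        (nhds 0) := by
      have := (Real.continuous_sqrt.tendsto' 0 0 Real.sqrt_zero).comp hinn
      exact this
    convert this using 1
    exact funext hm
  -- K (m t) → π/2 by squeeze
  have hsmall : ∀ᶠ t in l, (m t) ^ 2 ≤ 1/2 := by
    have h1 : ∀ᶠ x in nhds (0:ℝ), x ^ 2 ≤ 1/2 := by
      have : ∀ᶠ x in nhds (0:ℝ), x ∈ Set.Ioo (-(1/2) : ℝ) (1/2) :=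
        Ioo_mem_nhds (by norm_num) (by norm_num)
      filter_upwards [this] with x hx
      nlinarith [hx.1, hx.2]
    exact hmt.eventually h1
  have hupper : Tendsto (fun t => Real.pi/2 * (1 / Real.sqrt (1 - (m t) ^ 2))) l
      (nhds (Real.pi/2)) := by
    have h1 : Tendsto (fun t => 1 - (m t) ^ 2) l (nhds 1) := by
      have := (tendsto_const_nhds (x := (1:ℝ))).sub (hmt.pow 2)
      simpa using this
    have h2 : Tendsto (fun t => Real.sqrt (1 - (m t) ^ 2)) l (nhds 1) :=
      (Real.continuous_sqrt.tendsto' 1 1 Real.sqrt_one).comp h1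
    have h3 := (tendsto_const_nhds (x := (1:ℝ))).div h2 one_ne_zero
    have := (tendsto_const_nhds (x := (Real.pi/2))).mul h3
    simpa using this
  have hKt : Tendsto (fun t => K (m t)) l (nhds (Real.pi/2)) := by
    apply tendsto_of_tendsto_of_tendsto_of_le_of_le' (tendsto_const_nhds) hupper
    · filter_upwards [hsmall] with t ht
      rw [hK]
      exact (K_bounds_aux (m t) ht).1
    · filter_upwards [hsmall] with t ht
      rw [hK]
      exact (K_bounds_aux (m t) ht).2
  -- denominator
  have hgne : Real.sqrt (α₀ * s) ≠ 0 := by positivity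
  have hgt : Tendsto (fun t => Real.sqrt (t * Real.sqrt (64 * ω - 3 * t ^ 2 + 8 * c * t))) l
      (nhds (Real.sqrt (α₀ * s))) := by
    exact (Real.continuous_sqrt.tendsto' _ _ rfl).comp (htid.mul hFt)
  have hTt : Tendsto T l (nhds (8 * (Real.pi/2) / Real.sqrt (α₀ * s))) := by
    have : T = fun t => 8 * K (m t) /
        Real.sqrt (t * Real.sqrt (64 * ω - 3 * t ^ 2 + 8 * c * t)) := funext hT
    rw [this]
    exact ((tendsto_const_nhds (x := (8:ℝ))).mul hKt).div hgt hgne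
  rw [hsA, show 4 * Real.pi / Real.sqrt (α₀ * s) = 8 * (Real.pi/2) / Real.sqrt (α₀ * s) by ring]
  exact hTt
end

section
/- Let (ω, c) ∈ ℝ² satisfy condition (WC). Then, as η₃ tends to α₁ from the left within (α₀, α₁), T(η₃) tends to +∞. -/
open Real Filter

private lemma integrand_cont' {κ : ℝ} (h1 : κ^2 < 1) :
    Continuous (fun θ : ℝ => 1 / Real.sqrt (1 - κ^2 * Real.sin θ^2)) := by
  have hpos : ∀ θ : ℝ, 0 < 1 - κ^2 * Real.sin θ^2 := by
    intro θ
    nlinarith [Real.sin_sq_le_one θ, sq_nonneg κ, sq_nonneg (Real.sin θ)]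
  exact continuous_const.div
    ((by fun_prop : Continuous (fun θ : ℝ => 1 - κ^2 * Real.sin θ^2)).sqrt)
    (fun θ => (Real.sqrt_pos.2 (hpos θ)).ne')

private lemma Klow_pi' {κ : ℝ} (h0 : 0 ≤ κ) (h1 : κ < 1) :
    Real.pi / 2 ≤ ∫ θ in (0:ℝ)..(Real.pi/2), 1 / Real.sqrt (1 - κ^2 * Real.sin θ^2) := by
  have hκ2 : κ^2 < 1 := by nlinarith
  have hpos : ∀ θ : ℝ, 0 < 1 - κ^2 * Real.sin θ^2 := by
    intro θ
    nlinarith [Real.sin_sq_le_one θ, sq_nonneg κ, sq_nonneg (Real.sin θ)]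
  have hπ : (0:ℝ) ≤ Real.pi / 2 := by positivity
  have hint : IntervalIntegrable (fun θ : ℝ => 1 / Real.sqrt (1 - κ^2 * Real.sin θ^2))
      MeasureTheory.volume 0 (Real.pi/2) := (integrand_cont' hκ2).intervalIntegrable _ _
  calc Real.pi / 2 = ∫ _ in (0:ℝ)..(Real.pi/2), (1:ℝ) := by simp
    _ ≤ _ := by
        apply intervalIntegral.integral_mono_on hπ (intervalIntegrable_const) hint
        intro θ _
        rw [le_div_iff₀ (Real.sqrt_pos.2 (hpos θ)), one_mul]
        exact Real.sqrt_le_one.2 (by nlinarith [sq_nonneg (Real.sin θ), sq_nonneg κ])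

private lemma cos_claim' {κ σ ε co : ℝ} (h1 : κ < 1) (hco1 : co ≤ 1)
    (hco2 : 1 - σ^2/2 ≤ co) (hεσ2 : ε^2 ≤ σ^2) (hε2 : ε^2 = 2*(1-κ)) :
    1 - κ^2 * co^2 ≤ 2*σ^2 := by
  have h2a : 1 - κ^2 * co^2 ≤ 2*(1 - κ * co) := by
    nlinarith [sq_nonneg (1 - κ * co)]
  have h2b : 1 - κ * co ≤ σ^2 := by
    nlinarith [mul_nonneg (show (0:ℝ) ≤ 1 - κ by linarith) (show (0:ℝ) ≤ 1 - co by linarith)]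
  linarith

private lemma Klow_log' {κ : ℝ} (h0 : 1/2 ≤ κ) (h1 : κ < 1) :
    (- Real.log (Real.sqrt (2*(1-κ)))) / Real.sqrt 2
      ≤ ∫ θ in (0:ℝ)..(Real.pi/2), 1 / Real.sqrt (1 - κ^2 * Real.sin θ^2) := by
  have hκ2 : κ^2 < 1 := by nlinarith
  have hpos : ∀ θ : ℝ, 0 < 1 - κ^2 * Real.sin θ^2 := by
    intro θ
    nlinarith [Real.sin_sq_le_one θ, sq_nonneg κ, sq_nonneg (Real.sin θ)]
  set ε := Real.sqrt (2*(1-κ)) with hε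
  have hε0 : 0 < ε := Real.sqrt_pos.2 (by linarith)
  have hε1 : ε ≤ 1 := Real.sqrt_le_one.2 (by linarith)
  have hε2 : ε^2 = 2*(1-κ) := Real.sq_sqrt (by linarith)
  set f : ℝ → ℝ := fun θ => 1 / Real.sqrt (1 - κ^2 * Real.sin θ^2) with hf
  have hfc : Continuous f := integrand_cont' hκ2
  have hfnn : ∀ θ, 0 ≤ f θ := fun θ => by positivity
  set a := Real.pi/2 - 1 with ha
  set b := Real.pi/2 - ε with hb
  have hpi2 : (2:ℝ) ≤ Real.pi := Real.two_le_pi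
  have ha0 : 0 ≤ a := by rw [ha]; linarith
  have hab : a ≤ b := by rw [ha, hb]; linarith
  have hbπ : b ≤ Real.pi/2 := by rw [hb]; linarith
  -- restrict the integral
  have hsub : ∫ θ in a..b, f θ ≤ ∫ θ in (0:ℝ)..(Real.pi/2), f θ := by
    have h1' : (∫ θ in (0:ℝ)..a, f θ) + ∫ θ in a..(Real.pi/2), f θ
        = ∫ θ in (0:ℝ)..(Real.pi/2), f θ :=
      intervalIntegral.integral_add_adjacent_intervals
        (hfc.intervalIntegrable (μ := MeasureTheory.volume) _ _)
        (hfc.intervalIntegrable (μ := MeasureTheory.volume) _ _)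
    have h2' : (∫ θ in a..b, f θ) + ∫ θ in b..(Real.pi/2), f θ
        = ∫ θ in a..(Real.pi/2), f θ :=
      intervalIntegral.integral_add_adjacent_intervals
        (hfc.intervalIntegrable (μ := MeasureTheory.volume) _ _)
        (hfc.intervalIntegrable (μ := MeasureTheory.volume) _ _)
    have h3' : 0 ≤ ∫ θ in (0:ℝ)..a, f θ :=
      intervalIntegral.integral_nonneg ha0 (fun θ _ => hfnn θ)
    have h4' : 0 ≤ ∫ θ in b..(Real.pi/2), f θ :=
      intervalIntegral.integral_nonneg hbπ (fun θ _ => hfnn θ)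
    linarith
  -- pointwise lower bound on [a,b]
  set g : ℝ → ℝ := fun θ => (Real.sqrt 2)⁻¹ * (Real.pi/2 - θ)⁻¹ with hg
  have hgle : ∀ θ ∈ Set.Icc a b, g θ ≤ f θ := by
    intro θ hθ
    set σ := Real.pi/2 - θ with hσ
    have hσε : ε ≤ σ := by rw [hσ]; have := hθ.2; rw [hb] at this; linarith
    have hσ1 : σ ≤ 1 := by rw [hσ]; have := hθ.1; rw [ha] at this; linarith
    have hσ0 : 0 < σ := lt_of_lt_of_le hε0 hσε
    have hsin : Real.sin θ = Real.cos σ := by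
      rw [hσ, Real.cos_pi_div_two_sub]
    have hcos1 : Real.cos σ ≤ 1 := Real.cos_le_one σ
    have hcos2 : 1 - σ^2/2 ≤ Real.cos σ := Real.one_sub_sq_div_two_le_cos
    have hclaim : 1 - κ^2 * Real.sin θ^2 ≤ 2*σ^2 := by
      rw [hsin]
      exact cos_claim' h1 hcos1 hcos2 (by nlinarith) hε2
    have hsqle : Real.sqrt (1 - κ^2 * Real.sin θ^2) ≤ Real.sqrt 2 * σ := by
      calc Real.sqrt (1 - κ^2 * Real.sin θ^2) ≤ Real.sqrt (2*σ^2) :=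
            Real.sqrt_le_sqrt hclaim
        _ = Real.sqrt 2 * σ := by
            rw [Real.sqrt_mul (by norm_num : (0:ℝ) ≤ 2), Real.sqrt_sq hσ0.le]
    have : 1 / (Real.sqrt 2 * σ) ≤ f θ := by
      rw [hf]
      exact one_div_le_one_div_of_le (Real.sqrt_pos.2 (hpos θ)) hsqle
    calc g θ = 1 / (Real.sqrt 2 * σ) := by
          rw [hg, hσ]; rw [one_div, mul_inv]
      _ ≤ f θ := this
  have hgint : IntervalIntegrable g MeasureTheory.volume a b := by
    apply ContinuousOn.intervalIntegrable
    apply ContinuousOn.mul continuousOn_const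
    apply ContinuousOn.inv₀
    · fun_prop
    · intro θ hθ
      rw [Set.uIcc_of_le hab] at hθ
      have := hθ.2
      rw [hb] at this
      exact (by linarith : (0:ℝ) < Real.pi/2 - θ).ne'
  have hmono : ∫ θ in a..b, g θ ≤ ∫ θ in a..b, f θ :=
    intervalIntegral.integral_mono_on hab hgint (hfc.intervalIntegrable _ _) hgle
  -- compute ∫ g
  have hgcalc : ∫ θ in a..b, g θ = (- Real.log ε) / Real.sqrt 2 := by
    rw [hg]
    rw [intervalIntegral.integral_const_mul]
    have hcomp : ∫ θ in a..b, (Real.pi/2 - θ)⁻¹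
        = ∫ x in (Real.pi/2 - b)..(Real.pi/2 - a), x⁻¹ :=
      intervalIntegral.integral_comp_sub_left (fun x => x⁻¹) (Real.pi/2)
    have h1' : Real.pi/2 - b = ε := by rw [hb]; ring
    have h2' : Real.pi/2 - a = 1 := by rw [ha]; ring
    rw [hcomp, h1', h2', integral_inv_of_pos hε0 one_pos]
    rw [one_div, Real.log_inv]
    ring
  calc (- Real.log ε) / Real.sqrt 2 = ∫ θ in a..b, g θ := hgcalc.symm
    _ ≤ ∫ θ in a..b, f θ := hmono
    _ ≤ _ := hsub

private lemma Ktop' : Tendsto (fun κ : ℝ => ∫ θ in (0:ℝ)..(Real.pi/2),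
      1 / Real.sqrt (1 - κ^2 * Real.sin θ^2)) (nhdsWithin 1 (Set.Iio 1)) atTop := by
  have h1 : Tendsto (fun κ : ℝ => 2*(1-κ)) (nhdsWithin 1 (Set.Iio 1))
      (nhdsWithin 0 (Set.Ioi 0)) := by
    rw [tendsto_nhdsWithin_iff]
    constructor
    · have hc : Continuous (fun κ : ℝ => 2*(1-κ)) := by fun_prop
      have := (hc.tendsto 1).mono_left (nhdsWithin_le_nhds (s := Set.Iio 1))
      simpa using this
    · filter_upwards [eventually_mem_nhdsWithin] with κ hκ
      have : κ < 1 := hκ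
      simp only [Set.mem_Ioi]
      linarith
  have h2 : Tendsto Real.sqrt (nhdsWithin 0 (Set.Ioi 0)) (nhdsWithin 0 (Set.Ioi 0)) := by
    rw [tendsto_nhdsWithin_iff]
    constructor
    · have := (Real.continuous_sqrt.tendsto 0).mono_left (nhdsWithin_le_nhds (s := Set.Ioi (0:ℝ)))
      simpa using this
    · filter_upwards [eventually_mem_nhdsWithin] with x hx
      exact Real.sqrt_pos.2 hx
  have h3 : Tendsto (fun κ : ℝ => - Real.log (Real.sqrt (2*(1-κ))))
      (nhdsWithin 1 (Set.Iio 1)) atTop := by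
    have := Real.tendsto_log_nhdsGT_zero.comp (h2.comp h1)
    exact tendsto_neg_atBot_atTop.comp this
  have h4 : Tendsto (fun κ : ℝ => (- Real.log (Real.sqrt (2*(1-κ)))) / Real.sqrt 2)
      (nhdsWithin 1 (Set.Iio 1)) atTop :=
    h3.atTop_div_const (by positivity)
  apply tendsto_atTop_mono' _ _ h4
  filter_upwards [Ioo_mem_nhdsLT_of_mem (by norm_num : (1:ℝ) ∈ Set.Ioc (1/2) 1)] with κ hκ
  exact Klow_log' hκ.1.le hκ.2

set_option maxHeartbeats 2000000 in
theorem stmt_13 (ω c : ℝ) (hWC : ω > c ^ 2 / 4 ∨ (ω = c ^ 2 / 4 ∧ c > 0))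
    (α₀ α₁ : ℝ)
    (hα₀ : α₀ = (4 * c + Real.sqrt (48 * ω + 4 * c ^ 2)) / 3)
    (hα₁ : α₁ = 4 * Real.sqrt ω + 2 * c)
    (η₁ η₂ m : ℝ → ℝ)
    (hη₁ : ∀ t, η₁ t = (-t + 4 * c - Real.sqrt (64 * ω - 3 * t ^ 2 + 8 * c * t)) / 2)
    (hη₂ : ∀ t, η₂ t = (-t + 4 * c + Real.sqrt (64 * ω - 3 * t ^ 2 + 8 * c * t)) / 2)
    (hm : ∀ t, m t = Real.sqrt ((-η₁ t) * (t - η₂ t) / (t * (η₂ t - η₁ t))))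
    (K T : ℝ → ℝ)
    (hK : ∀ κ, K κ = ∫ θ in (0 : ℝ)..(Real.pi / 2),
      1 / Real.sqrt (1 - κ ^ 2 * Real.sin θ ^ 2))
    (hT : ∀ t, T t = 8 * K (m t) /
      Real.sqrt (t * Real.sqrt (64 * ω - 3 * t ^ 2 + 8 * c * t))) :
    Tendsto T (nhdsWithin α₁ (Set.Ioo α₀ α₁)) atTop := by
  have hω0 : 0 ≤ ω := by rcases hWC with h | ⟨h, hc⟩ <;> nlinarith [sq_nonneg c]
  set s := Real.sqrt ω with hs
  have hs2 : s ^ 2 = ω := Real.sq_sqrt hω0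
  have hs0 : 0 < s := by
    rcases hWC with h | ⟨h, hc⟩
    · exact Real.sqrt_pos.2 (lt_of_le_of_lt (by positivity) h)
    · exact Real.sqrt_pos.2 (by rw [h]; positivity)
  have hcs : c ≤ 2 * s := by
    rcases hWC with h | ⟨h, hc⟩ <;> nlinarith [hs2, hs0, sq_nonneg (2*s - c), sq_nonneg (2*s + c)]
  have hcs' : -(2 * s) ≤ c := by
    rcases hWC with h | ⟨h, hc⟩ <;> nlinarith [hs2, hs0, sq_nonneg (2*s - c), sq_nonneg (2*s + c)]
  set r := Real.sqrt (48 * ω + 4 * c ^ 2) with hrdef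
  have hr2 : r ^ 2 = 48 * ω + 4 * c ^ 2 := Real.sq_sqrt (by positivity)
  have hr0 : 0 < r := Real.sqrt_pos.2 (by nlinarith)
  have hα₀3 : 3 * α₀ = 4 * c + r := by rw [hα₀]; ring
  have hα₁s : α₁ = 4 * s + 2 * c := by rw [hα₁]
  have hkey : 6 * s + c ≤ r := by
    have h6 : 0 ≤ 6 * s + c := by linarith
    have hsq : (6 * s + c) ^ 2 ≤ r ^ 2 := by nlinarith [sq_nonneg (2*s - c)]
    nlinarith [hsq, hr0, h6]
  -- pointwise facts on the open interval
  have hIoo : ∀ t ∈ Set.Ioo α₀ α₁,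
      0 < t ∧ 0 < 64 * ω - 3 * t ^ 2 + 8 * c * t ∧ m t < 1 ∧
      0 < Real.sqrt (t * Real.sqrt (64 * ω - 3 * t ^ 2 + 8 * c * t)) := by
    rintro t ⟨ht0, ht1⟩
    have ht0' : 4 * c + r < 3 * t := by rw [← hα₀3]; linarith
    have ht1' : t < 4 * s + 2 * c := by rw [← hα₁s]; exact ht1
    have hr4c : -(4 * c) < r := by
      rcases hWC with h | ⟨h, hc⟩
      · have hclt : c ^ 2 < 4 * s ^ 2 := by nlinarith [hs2]
        nlinarith [hr0, hr2, hs2]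
      · linarith [hr0]
    have htpos : 0 < t := by linarith
    have hA : 0 < 64 * ω - 3 * t ^ 2 + 8 * c * t := by
      have f1 : 0 < 2 * r - 3 * t + 4 * c := by linarith
      have f2 : 0 < 2 * r + 3 * t - 4 * c := by linarith
      nlinarith [mul_pos f1 f2, hr2]
    have ha0 : 0 < Real.sqrt (64 * ω - 3 * t ^ 2 + 8 * c * t) := Real.sqrt_pos.2 hA
    have ha2 : (Real.sqrt (64 * ω - 3 * t ^ 2 + 8 * c * t)) ^ 2
        = 64 * ω - 3 * t ^ 2 + 8 * c * t := Real.sq_sqrt hA.le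
    set a := Real.sqrt (64 * ω - 3 * t ^ 2 + 8 * c * t) with hadef
    have hd : η₂ t - η₁ t = a := by rw [hη₁ t, hη₂ t, ← hadef]; ring
    have hprod : η₁ t * η₂ t = (t - 2 * c) ^ 2 - 16 * ω := by
      rw [hη₁ t, hη₂ t, ← hadef]
      linear_combination (-(1:ℝ)/4) * ha2
    have hts : (t - 2 * c) ^ 2 < 16 * ω := by
      have hu : t - 2 * c < 4 * s := by linarith
      have hl : -(4 * s) < t - 2 * c := by linarith
      nlinarith [mul_pos (show (0:ℝ) < 4*s - (t - 2*c) by linarith)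
        (show (0:ℝ) < 4*s + (t - 2*c) by linarith), hs2]
    have hη₁neg : η₁ t < 0 := by nlinarith [sq_nonneg (η₁ t), hd, hprod, hts, ha0]
    have hη₂pos : 0 < η₂ t := by nlinarith [sq_nonneg (η₂ t), hd, hprod, hts, ha0]
    have hsq2 : a ^ 2 < (3 * t - 4 * c) ^ 2 := by
      nlinarith [mul_pos (show (0:ℝ) < 3*t - 4*c - r by linarith)
        (show (0:ℝ) < 3*t - 4*c + r by linarith), ha2, hr2]
    have ha3 : a < 3 * t - 4 * c := by
      nlinarith [ha0, hsq2, show (0:ℝ) < 3*t - 4*c by linarith]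
    have hη₂t : η₂ t < t := by
      rw [hη₂ t, ← hadef]; linarith
    have hm1 : m t < 1 := by
      rw [hm t]
      have hden : 0 < t * (η₂ t - η₁ t) := by rw [hd]; positivity
      have hXnn : 0 ≤ (-η₁ t) * (t - η₂ t) / (t * (η₂ t - η₁ t)) := by
        apply div_nonneg _ hden.le
        apply mul_nonneg <;> linarith
      have hX1 : (-η₁ t) * (t - η₂ t) / (t * (η₂ t - η₁ t)) < 1 := by
        rw [div_lt_one hden]
        nlinarith [mul_pos hη₂pos (show 0 < t - η₁ t by linarith)]
      calc Real.sqrt ((-η₁ t) * (t - η₂ t) / (t * (η₂ t - η₁ t)))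
          < Real.sqrt 1 := Real.sqrt_lt_sqrt hXnn hX1
        _ = 1 := Real.sqrt_one
    exact ⟨htpos, hA, hm1, Real.sqrt_pos.2 (mul_pos htpos ha0)⟩
  have hKeq : K = fun κ => ∫ θ in (0:ℝ)..(Real.pi/2),
      1 / Real.sqrt (1 - κ ^ 2 * Real.sin θ ^ 2) := funext hK
  rcases hWC with hlt | ⟨heq, hc⟩
  · -- nondegenerate case : ω > c²/4
    have hclt : c < 2 * s := by nlinarith [hs2, hs0, hcs']
    have hclt' : -(2 * s) < c := by nlinarith [hs2, hs0, hclt]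
    have h4s2c : 0 < 4 * s + 2 * c := by linarith
    have h4s2c' : 0 < 4 * s - 2 * c := by linarith
    have hAα : 64 * ω - 3 * α₁ ^ 2 + 8 * c * α₁ = (4 * s - 2 * c) ^ 2 := by
      rw [hα₁s, ← hs2]; ring
    have hsqAα : Real.sqrt (64 * ω - 3 * α₁ ^ 2 + 8 * c * α₁) = 4 * s - 2 * c := by
      rw [hAα]; exact Real.sqrt_sq (by linarith)
    have hmclosed : ∀ t, m t = Real.sqrt
        ((t - 4 * c + Real.sqrt (64 * ω - 3 * t ^ 2 + 8 * c * t)) *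
          (3 * t - 4 * c - Real.sqrt (64 * ω - 3 * t ^ 2 + 8 * c * t)) /
          (4 * (t * Real.sqrt (64 * ω - 3 * t ^ 2 + 8 * c * t)))) := by
      intro t
      rw [hm t, hη₁ t, hη₂ t]
      congr 1
      ring
    have hval : (α₁ - 4 * c + Real.sqrt (64 * ω - 3 * α₁ ^ 2 + 8 * c * α₁)) *
        (3 * α₁ - 4 * c - Real.sqrt (64 * ω - 3 * α₁ ^ 2 + 8 * c * α₁)) /
        (4 * (α₁ * Real.sqrt (64 * ω - 3 * α₁ ^ 2 + 8 * c * α₁))) = 1 := by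
      rw [hsqAα, hα₁s]
      rw [div_eq_one_iff_eq (by nlinarith [mul_pos h4s2c h4s2c'])]
      ring
    have hcont : ContinuousAt (fun t : ℝ => Real.sqrt
        ((t - 4 * c + Real.sqrt (64 * ω - 3 * t ^ 2 + 8 * c * t)) *
          (3 * t - 4 * c - Real.sqrt (64 * ω - 3 * t ^ 2 + 8 * c * t)) /
          (4 * (t * Real.sqrt (64 * ω - 3 * t ^ 2 + 8 * c * t))))) α₁ := by
      apply Real.continuous_sqrt.continuousAt.comp
      apply ContinuousAt.div
      · fun_prop
      · fun_prop
      · show 4 * (α₁ * Real.sqrt (64 * ω - 3 * α₁ ^ 2 + 8 * c * α₁)) ≠ 0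
        rw [hsqAα, hα₁s]
        nlinarith [mul_pos h4s2c h4s2c']
    have hmc : Tendsto m (nhdsWithin α₁ (Set.Ioo α₀ α₁)) (nhdsWithin 1 (Set.Iio 1)) := by
      rw [tendsto_nhdsWithin_iff]
      constructor
      · have h2' : Tendsto (fun t : ℝ => Real.sqrt
            ((t - 4 * c + Real.sqrt (64 * ω - 3 * t ^ 2 + 8 * c * t)) *
              (3 * t - 4 * c - Real.sqrt (64 * ω - 3 * t ^ 2 + 8 * c * t)) /
              (4 * (t * Real.sqrt (64 * ω - 3 * t ^ 2 + 8 * c * t)))))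
            (nhdsWithin α₁ (Set.Ioo α₀ α₁)) (nhds 1) := by
          have := hcont.tendsto.mono_left
            (nhdsWithin_le_nhds (s := Set.Ioo α₀ α₁))
          simpa [hval, Real.sqrt_one] using this
        exact h2'.congr (fun t => (hmclosed t).symm)
      · filter_upwards [eventually_mem_nhdsWithin] with t ht
        exact (hIoo t ht).2.2.1
    have hKm : Tendsto (fun t => K (m t)) (nhdsWithin α₁ (Set.Ioo α₀ α₁)) atTop := by
      rw [hKeq]
      exact Ktop'.comp hmc
    have hnum : Tendsto (fun t => 8 * K (m t)) (nhdsWithin α₁ (Set.Ioo α₀ α₁)) atTop :=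
      hKm.const_mul_atTop (by norm_num)
    have hDpos : 0 < Real.sqrt ((4 * s + 2 * c) * (4 * s - 2 * c)) :=
      Real.sqrt_pos.2 (mul_pos h4s2c h4s2c')
    have hDt : Tendsto (fun t : ℝ => Real.sqrt (t * Real.sqrt (64 * ω - 3 * t ^ 2 + 8 * c * t)))
        (nhdsWithin α₁ (Set.Ioo α₀ α₁)) (nhds (Real.sqrt ((4 * s + 2 * c) * (4 * s - 2 * c)))) := by
      have hcontD : ContinuousAt (fun t : ℝ =>
          Real.sqrt (t * Real.sqrt (64 * ω - 3 * t ^ 2 + 8 * c * t))) α₁ := by fun_prop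
      have hvalD : Real.sqrt (α₁ * Real.sqrt (64 * ω - 3 * α₁ ^ 2 + 8 * c * α₁))
          = Real.sqrt ((4 * s + 2 * c) * (4 * s - 2 * c)) := by rw [hsqAα, hα₁s]
      have := hcontD.tendsto.mono_left (nhdsWithin_le_nhds (s := Set.Ioo α₀ α₁))
      simpa only [hvalD] using this
    have hinv : Tendsto (fun t : ℝ =>
        (Real.sqrt (t * Real.sqrt (64 * ω - 3 * t ^ 2 + 8 * c * t)))⁻¹)
        (nhdsWithin α₁ (Set.Ioo α₀ α₁))
        (nhds (Real.sqrt ((4 * s + 2 * c) * (4 * s - 2 * c)))⁻¹) :=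
      hDt.inv₀ hDpos.ne'
    have hfin := hnum.atTop_mul_pos (inv_pos.2 hDpos) hinv
    exact hfin.congr (fun t => by rw [hT t, div_eq_mul_inv])
  · -- degenerate case : ω = c²/4, c > 0
    have hsval : s = c / 2 := by
      rw [hs, heq, show c ^ 2 / 4 = (c/2) ^ 2 by ring]
      exact Real.sqrt_sq (by linarith)
    have hAα : 64 * ω - 3 * α₁ ^ 2 + 8 * c * α₁ = 0 := by
      rw [hα₁s, hsval, heq]; ring
    have hD0 : Tendsto (fun t : ℝ => Real.sqrt (t * Real.sqrt (64 * ω - 3 * t ^ 2 + 8 * c * t)))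
        (nhdsWithin α₁ (Set.Ioo α₀ α₁)) (nhdsWithin 0 (Set.Ioi 0)) := by
      rw [tendsto_nhdsWithin_iff]
      constructor
      · have hcontD : ContinuousAt (fun t : ℝ =>
            Real.sqrt (t * Real.sqrt (64 * ω - 3 * t ^ 2 + 8 * c * t))) α₁ := by fun_prop
        have := hcontD.tendsto.mono_left (nhdsWithin_le_nhds (s := Set.Ioo α₀ α₁))
        simpa [hAα] using this
      · filter_upwards [eventually_mem_nhdsWithin] with t ht
        exact (hIoo t ht).2.2.2
    have hinv : Tendsto (fun t : ℝ =>
        (Real.sqrt (t * Real.sqrt (64 * ω - 3 * t ^ 2 + 8 * c * t)))⁻¹)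
        (nhdsWithin α₁ (Set.Ioo α₀ α₁)) atTop := hD0.inv_tendsto_nhdsGT_zero
    have hmul : Tendsto (fun t : ℝ =>
        (4 * Real.pi) * (Real.sqrt (t * Real.sqrt (64 * ω - 3 * t ^ 2 + 8 * c * t)))⁻¹)
        (nhdsWithin α₁ (Set.Ioo α₀ α₁)) atTop := hinv.const_mul_atTop (by positivity)
    apply tendsto_atTop_mono' _ ?_ hmul
    filter_upwards [eventually_mem_nhdsWithin] with t ht
    obtain ⟨htpos, hA, hm1, hD⟩ := hIoo t ht
    have hm0 : 0 ≤ m t := by rw [hm t]; exact Real.sqrt_nonneg _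
    have hKlow : Real.pi / 2 ≤ K (m t) := by
      rw [hK (m t)]
      exact Klow_pi' hm0 hm1
    rw [hT t, div_eq_mul_inv]
    have hinvnn : 0 ≤ (Real.sqrt (t * Real.sqrt (64 * ω - 3 * t ^ 2 + 8 * c * t)))⁻¹ := by
      positivity
    exact mul_le_mul_of_nonneg_right (by linarith) hinvnn
end

section
/- Let (ω, c) ∈ ℝ² satisfy ω > c²/4. Then the mass of the soliton profile satisfies ∫_{−∞}^{∞} (4ω − c²)/(√ω · cosh(√(4ω − c²) x) − c/2) dx = 8 arctan(√((2√ω + c)/(2√ω − c))). -/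
open Real MeasureTheory Filter Set

lemma my_hasDerivAt_tanh (y : ℝ) : HasDerivAt Real.tanh (1 / Real.cosh y ^ 2) y := by
  have h := (Real.hasDerivAt_sinh y).div (Real.hasDerivAt_cosh y) (ne_of_gt (Real.cosh_pos y))
  have he : (Real.sinh / Real.cosh) = Real.tanh :=
    funext fun z => (Real.tanh_eq_sinh_div_cosh z).symm
  rw [he] at h
  refine h.congr_deriv (Eq.symm ?_)
  have h2 := Real.cosh_sq_sub_sinh_sq y
  congr 1
  nlinarith

lemma my_tanh_eq (y : ℝ) :
    Real.tanh y = (1 - Real.exp (-(2*y))) / (1 + Real.exp (-(2*y))) := by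
  rw [Real.tanh_eq_sinh_div_cosh, Real.sinh_eq, Real.cosh_eq,
    show -(2*y) = -y + -y by ring, Real.exp_add, Real.exp_neg]
  have h : Real.exp y ≠ 0 := Real.exp_ne_zero y
  have h0 : 0 < Real.exp y := Real.exp_pos y
  have hne1 : Real.exp y + (Real.exp y)⁻¹ ≠ 0 := by positivity
  have hne2 : 1 + (Real.exp y)⁻¹ * (Real.exp y)⁻¹ ≠ 0 := by positivity
  field_simp

lemma my_tanh_atTop : Tendsto Real.tanh atTop (nhds 1) := by
  rw [funext my_tanh_eq]
  have h0 : Tendsto (fun y : ℝ => Real.exp (-(2*y))) atTop (nhds 0) := by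
    apply Real.tendsto_exp_atBot.comp
    exact (tendsto_neg_atTop_atBot.comp (tendsto_id.const_mul_atTop two_pos))
  have ha : Tendsto (fun y : ℝ => 1 - Real.exp (-(2*y))) atTop (nhds (1 - 0)) :=
    tendsto_const_nhds.sub h0
  have hb : Tendsto (fun y : ℝ => 1 + Real.exp (-(2*y))) atTop (nhds (1 + 0)) :=
    tendsto_const_nhds.add h0
  have := ha.div hb (by norm_num)
  simpa only [Pi.div_def, sub_zero, add_zero, div_one] using this

lemma my_tanh_atBot : Tendsto Real.tanh atBot (nhds (-1)) := by
  have h := (my_tanh_atTop.comp tendsto_neg_atBot_atTop).neg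
  have he : (fun y : ℝ => -Real.tanh (-y)) = Real.tanh := by
    funext y; simp [Real.tanh_neg]
  simpa [he] using h

lemma my_alg (ω c s k lam ch sh : ℝ) (hch : 0 < ch) (hid : ch^2 = sh^2 + 1)
    (hklam : k*lam = 2*s + c) (hk2 : k^2 = 4*ω - c^2) (hs2 : s^2 = ω)
    (hd1 : 0 < s*(ch^2+sh^2) - c/2) :
    (4*ω - c^2) / (s*(ch^2+sh^2) - c/2)
      = 4 * (1/(1+(lam*(sh/ch))^2) * (lam*(1/ch^2*(k/2)))) := by
  have hch2 : ch ≠ 0 := ne_of_gt hch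
  have hchsq : (0:ℝ) < ch^2 := by positivity
  have hd2 : (0:ℝ) < ch^2 + lam^2*sh^2 := by nlinarith [sq_nonneg (lam*sh)]
  have key : (4*ω - c^2) * (ch^2 + lam^2*sh^2)
      = (2*k*lam) * (s*(ch^2+sh^2) - c/2) := by
    linear_combination (-(c*(2*s+c)))*hid + (-(lam^2*sh^2))*hk2 + (-(4*ch^2))*hs2
      + ((k*lam + 2*s + c)*sh^2 - 2*s*ch^2 - 2*s*sh^2 + c)*hklam
  have hne3 : 1 + (lam*(sh/ch))^2 ≠ 0 := by positivity
  have hR : 4 * (1/(1+(lam*(sh/ch))^2) * (lam*(1/ch^2*(k/2))))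
      = (2*k*lam)/(ch^2+lam^2*sh^2) := by
    rw [eq_div_iff (ne_of_gt hd2)]
    field_simp
    ring
  rw [hR, div_eq_div_iff (ne_of_gt hd1) (ne_of_gt hd2)]
  linear_combination key

set_option maxHeartbeats 800000 in
theorem stmt_14 (ω c : ℝ) (hWC : ω > c ^ 2 / 4) :
    ∫ x : ℝ, (4 * ω - c ^ 2) /
        (Real.sqrt ω * Real.cosh (Real.sqrt (4 * ω - c ^ 2) * x) - c / 2) =
      8 * Real.arctan (Real.sqrt ((2 * Real.sqrt ω + c) / (2 * Real.sqrt ω - c))) := by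
  have h4 : 0 < 4 * ω - c ^ 2 := by nlinarith
  have hω : 0 < ω := by nlinarith [sq_nonneg c]
  set s := Real.sqrt ω with hs_def
  set k := Real.sqrt (4 * ω - c ^ 2) with hk_def
  have hs0 : 0 < s := Real.sqrt_pos.mpr hω
  have hk0 : 0 < k := Real.sqrt_pos.mpr h4
  have hs2 : s ^ 2 = ω := Real.sq_sqrt hω.le
  have hk2 : k ^ 2 = 4 * ω - c ^ 2 := Real.sq_sqrt h4.le
  have hnum : 0 < 2 * s + c := by nlinarith
  have hden : 0 < 2 * s - c := by nlinarith
  set lam := Real.sqrt ((2 * s + c) / (2 * s - c)) with hlam_def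
  have hlam2 : lam ^ 2 = (2 * s + c) / (2 * s - c) := Real.sq_sqrt (by positivity)
  have hlam0 : 0 < lam := Real.sqrt_pos.mpr (by positivity)
  have hlam2' : lam ^ 2 * (2 * s - c) = 2 * s + c := by
    rw [hlam2]; field_simp
  have hkey : k = lam * (2 * s - c) := by
    have h1 : (lam * (2 * s - c)) ^ 2 = k ^ 2 := by
      rw [mul_pow]
      linear_combination (2*s - c) * hlam2' - hk2 + 4*hs2
    calc k = Real.sqrt (k ^ 2) := (Real.sqrt_sq hk0.le).symm
      _ = Real.sqrt ((lam * (2 * s - c)) ^ 2) := by rw [h1]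
      _ = lam * (2 * s - c) := Real.sqrt_sq (by positivity)
  have hklam : k * lam = 2 * s + c := by
    calc k * lam = lam ^ 2 * (2 * s - c) := by rw [hkey]; ring
      _ = 2 * s + c := hlam2'
  set F : ℝ → ℝ := fun x => 4 * Real.arctan (lam * Real.tanh (k * x / 2)) with hF_def
  have hpos : ∀ x : ℝ, 0 < s * Real.cosh (k * x) - c / 2 := by
    intro x
    nlinarith [Real.one_le_cosh (k * x)]
  have hderiv : ∀ x : ℝ, HasDerivAt F
      ((4 * ω - c ^ 2) / (s * Real.cosh (k * x) - c / 2)) x := by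
    intro x
    have h1 : HasDerivAt (fun x : ℝ => k * x / 2) (k / 2) x := by
      simpa using ((hasDerivAt_id x).const_mul k).div_const 2
    have h2 := ((my_hasDerivAt_tanh (k * x / 2)).comp x h1).const_mul lam
    have h3 := (Real.hasDerivAt_arctan (lam * Real.tanh (k * x / 2))).comp x h2
    have h5 := h3.const_mul 4
    refine h5.congr_deriv (Eq.symm ?_)
    have hp := hpos x
    have hc2 := Real.cosh_two_mul (k * x / 2)
    rw [show (2:ℝ) * (k * x / 2) = k * x by ring] at hc2
    rw [hc2] at hp ⊢
    rw [Real.tanh_eq_sinh_div_cosh]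
    exact my_alg ω c s k lam (Real.cosh (k * x / 2)) (Real.sinh (k * x / 2))
      (Real.cosh_pos _) (Real.cosh_sq _) hklam hk2 hs2 hp
  have hmapTop : Tendsto (fun x : ℝ => k * x / 2) atTop atTop :=
    (tendsto_id.const_mul_atTop hk0).atTop_div_const two_pos
  have hmapBot : Tendsto (fun x : ℝ => k * x / 2) atBot atBot :=
    (tendsto_id.const_mul_atBot hk0).atBot_div_const two_pos
  have hFtop : Tendsto F atTop (nhds (4 * Real.arctan lam)) := by
    have h1 : Tendsto (fun x : ℝ => lam * Real.tanh (k * x / 2)) atTop (nhds (lam * 1)) :=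
      (my_tanh_atTop.comp hmapTop).const_mul lam
    have h2 := (Real.continuous_arctan.tendsto (lam * 1)).comp h1
    have h3 := h2.const_mul (4:ℝ)
    simpa only [mul_one, Function.comp_def] using h3
  have hFbot : Tendsto F atBot (nhds (-(4 * Real.arctan lam))) := by
    have h1 : Tendsto (fun x : ℝ => lam * Real.tanh (k * x / 2)) atBot (nhds (lam * (-1))) :=
      (my_tanh_atBot.comp hmapBot).const_mul lam
    have h2 := (Real.continuous_arctan.tendsto (lam * (-1))).comp h1
    have h3 := h2.const_mul (4:ℝ)
    have he : Real.arctan (lam * (-1)) = -Real.arctan lam := by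
      rw [mul_neg_one, Real.arctan_neg]
    rw [he] at h3
    have : (4:ℝ) * -Real.arctan lam = -(4 * Real.arctan lam) := by ring
    rw [this] at h3
    simpa only [Function.comp_def] using h3
  have hIoi : IntegrableOn (fun x : ℝ => (4 * ω - c ^ 2) / (s * Real.cosh (k * x) - c / 2))
      (Ioi 0) := by
    exact integrableOn_Ioi_deriv_of_nonneg' (fun x _ => hderiv x)
      (fun x _ => div_nonneg h4.le (hpos x).le) hFtop
  have heven : (fun x : ℝ => (4 * ω - c ^ 2) / (s * Real.cosh (k * x) - c / 2)) ∘ Neg.neg =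
      fun x : ℝ => (4 * ω - c ^ 2) / (s * Real.cosh (k * x) - c / 2) := by
    funext x
    simp only [Function.comp_apply, mul_neg, Real.cosh_neg]
  have hIci : IntegrableOn (fun x : ℝ => (4 * ω - c ^ 2) / (s * Real.cosh (k * x) - c / 2))
      (Ici 0) := by
    rwa [integrableOn_Ici_iff_integrableOn_Ioi]
  have h_map_neg : ((volume : Measure ℝ).restrict (Ici 0)).map Neg.neg
      = (volume : Measure ℝ).restrict (Iic 0) := by
    conv => rhs; rw [← Measure.map_neg_eq_self (volume : Measure ℝ),
      measurableEmbedding_neg.restrict_map]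
    simp
  have hIic : IntegrableOn (fun x : ℝ => (4 * ω - c ^ 2) / (s * Real.cosh (k * x) - c / 2))
      (Iic 0) := by
    rw [IntegrableOn, ← h_map_neg, measurableEmbedding_neg.integrable_map_iff, heven]
    exact hIci
  have hint : Integrable (fun x : ℝ => (4 * ω - c ^ 2) / (s * Real.cosh (k * x) - c / 2)) := by
    rw [← integrableOn_univ, ← Set.Iic_union_Ioi (a := (0:ℝ))]
    exact hIic.union hIoi
  calc (∫ x : ℝ, (4 * ω - c ^ 2) / (s * Real.cosh (k * x) - c / 2))
      = 4 * Real.arctan lam - (-(4 * Real.arctan lam)) :=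
        integral_of_hasDerivAt_of_tendsto hderiv hint hFbot hFtop
    _ = 8 * Real.arctan lam := by ring
end

section
/- Define, for κ' ∈ (0, 1) and τ ∈ [0, π/2], the incomplete elliptic integrals E(τ, κ') = ∫₀^τ √(1 − κ'² sin²θ) dθ and F(τ, κ') = ∫₀^τ (1 − κ'² sin²θ)^{−1/2} dθ, and the complete elliptic integral K(κ) = ∫₀^{π/2} (1 − κ² sin²θ)^{−1/2} dθ. Then, as κ' tends to 0 from the right, K(√(1 − κ'²)) · sup_{τ ∈ [0, π/2]} |E(τ, κ') − F(τ, κ')| tends to 0. -/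
open Real Filter

theorem stmt_16 (E F : ℝ → ℝ → ℝ) (K : ℝ → ℝ)
    (hE : ∀ τ κ, E τ κ = ∫ θ in (0 : ℝ)..τ, Real.sqrt (1 - κ ^ 2 * Real.sin θ ^ 2))
    (hF : ∀ τ κ, F τ κ = ∫ θ in (0 : ℝ)..τ, 1 / Real.sqrt (1 - κ ^ 2 * Real.sin θ ^ 2))
    (hK : ∀ κ, K κ = ∫ θ in (0 : ℝ)..(Real.pi / 2),
      1 / Real.sqrt (1 - κ ^ 2 * Real.sin θ ^ 2)) :
    Tendsto (fun κ' : ℝ =>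
        K (Real.sqrt (1 - κ' ^ 2)) *
          ⨆ τ : Set.Icc (0 : ℝ) (Real.pi / 2), |E τ κ' - F τ κ'|)
      (nhdsWithin (0 : ℝ) (Set.Ioi (0 : ℝ))) (nhds 0) := by
  have hpi : (0:ℝ) < Real.pi / 2 := by positivity
  have hmem : Set.Ioo (0:ℝ) 1 ∈ nhdsWithin (0:ℝ) (Set.Ioi 0) :=
    Ioo_mem_nhdsGT_of_mem (by constructor <;> norm_num)
  -- the majorant
  have hG : Tendsto (fun κ' : ℝ => (Real.pi/2/κ') * (κ'^2 / Real.sqrt (1 - κ'^2) * (Real.pi/2)))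
      (nhdsWithin (0:ℝ) (Set.Ioi 0)) (nhds 0) := by
    have hc : ContinuousAt (fun κ' : ℝ => (Real.pi/2)^2 * (κ' / Real.sqrt (1 - κ'^2))) 0 := by
      apply ContinuousAt.mul continuousAt_const
      apply ContinuousAt.div continuousAt_id
      · exact (Real.continuous_sqrt.comp (by fun_prop)).continuousAt
      · simp
    have h0 : Tendsto (fun κ' : ℝ => (Real.pi/2)^2 * (κ' / Real.sqrt (1 - κ'^2)))
        (nhdsWithin (0:ℝ) (Set.Ioi 0)) (nhds 0) := by
      have := hc.tendsto
      simp only [ne_eq, zero_div, mul_zero] at this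
      exact this.mono_left nhdsWithin_le_nhds
    apply h0.congr'
    filter_upwards [hmem] with κ' hκ'
    have hk2 : (0:ℝ) < 1 - κ'^2 := by nlinarith [hκ'.1, hκ'.2]
    have hs : Real.sqrt (1 - κ'^2) ≠ 0 := ne_of_gt (Real.sqrt_pos.2 hk2)
    have hne : κ' ≠ 0 := ne_of_gt hκ'.1
    field_simp
  apply squeeze_zero' _ _ hG
  · filter_upwards [hmem] with κ' hκ'
    have hk2 : (0:ℝ) < 1 - κ'^2 := by nlinarith [hκ'.1, hκ'.2]
    have hK0 : 0 ≤ K (Real.sqrt (1 - κ'^2)) := by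
      rw [hK]
      exact intervalIntegral.integral_nonneg (by positivity) (fun θ _ => by positivity)
    exact mul_nonneg hK0 (Real.iSup_nonneg fun τ => abs_nonneg _)
  · filter_upwards [hmem] with κ' hκ'
    obtain ⟨h0, h1⟩ := hκ'
    have hk2 : (0:ℝ) < 1 - κ'^2 := by nlinarith
    have hsqk : 0 < Real.sqrt (1 - κ'^2) := Real.sqrt_pos.2 hk2
    have hge : ∀ θ : ℝ, 1 - κ'^2 ≤ 1 - κ'^2 * Real.sin θ ^ 2 := by
      intro θ
      nlinarith [Real.sin_sq_le_one θ, sq_nonneg κ']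
    have hle1 : ∀ θ : ℝ, 1 - κ'^2 * Real.sin θ ^ 2 ≤ 1 := by
      intro θ
      nlinarith [sq_nonneg (Real.sin θ), sq_nonneg κ']
    -- bound on K
    have hKle : K (Real.sqrt (1 - κ'^2)) ≤ Real.pi/2/κ' := by
      rw [hK]
      have hsq : (Real.sqrt (1 - κ'^2))^2 = 1 - κ'^2 := Real.sq_sqrt hk2.le
      have hb : ∀ θ ∈ Set.uIoc (0:ℝ) (Real.pi/2),
          ‖1 / Real.sqrt (1 - (Real.sqrt (1 - κ'^2))^2 * Real.sin θ ^ 2)‖ ≤ 1/κ' := by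
        intro θ _
        rw [Real.norm_eq_abs, abs_of_nonneg (by positivity)]
        have hd : κ'^2 ≤ 1 - (Real.sqrt (1 - κ'^2))^2 * Real.sin θ ^ 2 := by
          rw [hsq]
          nlinarith [Real.sin_sq_le_one θ, hk2]
        have hsd : κ' ≤ Real.sqrt (1 - (Real.sqrt (1 - κ'^2))^2 * Real.sin θ ^ 2) := by
          calc κ' = Real.sqrt (κ'^2) := (Real.sqrt_sq h0.le).symm
            _ ≤ _ := Real.sqrt_le_sqrt hd
        exact one_div_le_one_div_of_le h0 hsd
      calc (∫ θ in (0:ℝ)..(Real.pi/2), 1 / Real.sqrt (1 - (Real.sqrt (1 - κ'^2))^2 * Real.sin θ ^ 2))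
          ≤ ‖∫ θ in (0:ℝ)..(Real.pi/2), 1 / Real.sqrt (1 - (Real.sqrt (1 - κ'^2))^2 * Real.sin θ ^ 2)‖ :=
            le_abs_self _
        _ ≤ (1/κ') * |Real.pi/2 - 0| := intervalIntegral.norm_integral_le_of_norm_le_const hb
        _ = Real.pi/2/κ' := by rw [sub_zero, abs_of_nonneg hpi.le]; ring
    -- bound on the sup
    have hsup : (⨆ τ : Set.Icc (0:ℝ) (Real.pi/2), |E τ κ' - F τ κ'|)
        ≤ κ'^2 / Real.sqrt (1 - κ'^2) * (Real.pi/2) := by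
      apply Real.iSup_le _ (by positivity)
      rintro ⟨τ, hτ0, hτπ⟩
      simp only
      rw [hE, hF]
      have hcont1 : Continuous fun θ : ℝ => Real.sqrt (1 - κ'^2 * Real.sin θ ^ 2) :=
        Real.continuous_sqrt.comp (by fun_prop)
      have hcont2 : Continuous fun θ : ℝ => 1 / Real.sqrt (1 - κ'^2 * Real.sin θ ^ 2) := by
        apply Continuous.div continuous_const (Real.continuous_sqrt.comp (by fun_prop))
        intro θ
        exact ne_of_gt (Real.sqrt_pos.2 (lt_of_lt_of_le hk2 (hge θ)))
      rw [← intervalIntegral.integral_sub (hcont1.intervalIntegrable 0 τ)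
        (hcont2.intervalIntegrable 0 τ)]
      have hb : ∀ θ ∈ Set.uIoc (0:ℝ) τ,
          ‖Real.sqrt (1 - κ'^2 * Real.sin θ ^ 2) - 1 / Real.sqrt (1 - κ'^2 * Real.sin θ ^ 2)‖
            ≤ κ'^2 / Real.sqrt (1 - κ'^2) := by
        intro θ _
        set g := 1 - κ'^2 * Real.sin θ ^ 2 with hgdef
        have hga : 1 - κ'^2 ≤ g := hge θ
        have hgb : g ≤ 1 := hle1 θ
        have hgpos : 0 < g := lt_of_lt_of_le hk2 hga
        have hsp : 0 < Real.sqrt g := Real.sqrt_pos.2 hgpos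
        have hs1 : Real.sqrt g ≤ 1 := Real.sqrt_le_one.2 hgb
        have hsge : Real.sqrt (1 - κ'^2) ≤ Real.sqrt g := Real.sqrt_le_sqrt hga
        have hmono : Real.sqrt g ≤ 1 / Real.sqrt g := by
          calc Real.sqrt g ≤ 1 := hs1
            _ ≤ 1 / Real.sqrt g := by rw [le_div_iff₀ hsp, one_mul]; exact hs1
        rw [Real.norm_eq_abs, abs_sub_comm, abs_of_nonneg (sub_nonneg.2 hmono)]
        have heq : 1 / Real.sqrt g - Real.sqrt g = (1 - g) / Real.sqrt g := by
          field_simp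
          rw [Real.sq_sqrt hgpos.le]
        rw [heq]
        have hnum : 1 - g ≤ κ'^2 := by
          rw [hgdef]
          nlinarith [Real.sin_sq_le_one θ, sq_nonneg κ']
        exact div_le_div₀ (by positivity) hnum hsqk hsge
      calc |(∫ θ in (0:ℝ)..τ, (Real.sqrt (1 - κ'^2 * Real.sin θ ^ 2)
              - 1 / Real.sqrt (1 - κ'^2 * Real.sin θ ^ 2)))|
          ≤ κ'^2 / Real.sqrt (1 - κ'^2) * |τ - 0| :=
            intervalIntegral.norm_integral_le_of_norm_le_const hb
        _ = κ'^2 / Real.sqrt (1 - κ'^2) * τ := by rw [sub_zero, abs_of_nonneg hτ0]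
        _ ≤ κ'^2 / Real.sqrt (1 - κ'^2) * (Real.pi/2) := by
            apply mul_le_mul_of_nonneg_left hτπ (by positivity)
    have hK0 : 0 ≤ K (Real.sqrt (1 - κ'^2)) := by
      rw [hK]
      exact intervalIntegral.integral_nonneg (by positivity) (fun θ _ => by positivity)
    exact mul_le_mul hKle hsup (Real.iSup_nonneg fun τ => abs_nonneg _) (by positivity)
end

section
/- Let (ω, c) ∈ ℝ² satisfy condition (WC) and set α₁ = 4√ω + 2c. Let (Lₙ) be a sequence of positive reals with Lₙ → ∞. Let Φ : ℝ → ℝ be twice continuously differentiable with −Φ''(x) + (ω − c²/4)Φ(x) + (c/2)Φ(x)³ − (3/16)Φ(x)⁵ = 0 for all x ∈ ℝ, with Φ(x)² ≤ α₁ for all x, and with Φ(x) → 0 and Φ'(x) → 0 as |x| → ∞. For each n let Φₙ : ℝ → ℝ be twice continuously differentiable with −Φₙ''(x) + (ω − c²/4)Φₙ(x) + (c/2)Φₙ(x)³ − (3/16)Φₙ(x)⁵ = 0 and Φₙ(x)² ≤ α₁ for all x ∈ [−Lₙ, Lₙ], and with Φₙ'(Lₙ) = Φₙ'(−Lₙ)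 = 0. If ∫_{−Lₙ}^{Lₙ} (Φₙ − Φ)² dx → 0 as n → ∞, then also ∫_{−Lₙ}^{Lₙ} (Φₙ'' − Φ'')² dx → 0 and ∫_{−Lₙ}^{Lₙ} (Φₙ' − Φ')² dx → 0 as n → ∞. -/
open Real Filter

private lemma abs_le_sqrt_of_sq_le {a α : ℝ} (h : a ^ 2 ≤ α) : |a| ≤ Real.sqrt α := by
  have := Real.sqrt_le_sqrt h
  rwa [Real.sqrt_sq_eq_abs] at this

private lemma key_bound (A B C α a b : ℝ) (ha : a ^ 2 ≤ α) (hb : b ^ 2 ≤ α) :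
    |A * (a - b) + B * (a ^ 3 - b ^ 3) + C * (a ^ 5 - b ^ 5)| ≤
      (|A| + 3 * |B| * α + 5 * |C| * α ^ 2) * |a - b| := by
  have hα : 0 ≤ α := le_trans (sq_nonneg a) ha
  have hab : |a * b| ≤ α := by
    rw [abs_le]
    constructor <;> nlinarith [sq_nonneg (a + b), sq_nonneg (a - b)]
  obtain ⟨hab1, hab2⟩ := abs_le.mp hab
  have hs : |a ^ 2 + a * b + b ^ 2| ≤ 3 * α := by
    rw [abs_le]; constructor <;> nlinarith
  have h1 : a ^ 2 * b ^ 2 ≤ α ^ 2 := by nlinarith [sq_nonneg a, sq_nonneg b]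
  have h2 : a ^ 4 ≤ α ^ 2 := by nlinarith [sq_nonneg a]
  have h3 : b ^ 4 ≤ α ^ 2 := by nlinarith [sq_nonneg b]
  have h4 : |a * b * (a ^ 2 + b ^ 2)| ≤ 2 * α ^ 2 := by
    rw [abs_mul]
    have h5 : |a ^ 2 + b ^ 2| ≤ 2 * α := by
      rw [abs_of_nonneg (by positivity)]; linarith
    calc |a * b| * |a ^ 2 + b ^ 2| ≤ α * (2 * α) :=
          mul_le_mul hab h5 (abs_nonneg _) hα
      _ = 2 * α ^ 2 := by ring
  obtain ⟨h41, h42⟩ := abs_le.mp h4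
  have ht : |a ^ 4 + a ^ 3 * b + a ^ 2 * b ^ 2 + a * b ^ 3 + b ^ 4| ≤ 5 * α ^ 2 := by
    rw [abs_le]; constructor <;> nlinarith [sq_nonneg (a ^ 2 - b ^ 2)]
  have factored : A * (a - b) + B * (a ^ 3 - b ^ 3) + C * (a ^ 5 - b ^ 5)
      = (A + B * (a ^ 2 + a * b + b ^ 2)
          + C * (a ^ 4 + a ^ 3 * b + a ^ 2 * b ^ 2 + a * b ^ 3 + b ^ 4)) * (a - b) := by
    ring
  rw [factored, abs_mul]
  apply mul_le_mul_of_nonneg_right _ (abs_nonneg _)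
  calc |A + B * (a ^ 2 + a * b + b ^ 2)
          + C * (a ^ 4 + a ^ 3 * b + a ^ 2 * b ^ 2 + a * b ^ 3 + b ^ 4)|
      ≤ |A + B * (a ^ 2 + a * b + b ^ 2)|
          + |C * (a ^ 4 + a ^ 3 * b + a ^ 2 * b ^ 2 + a * b ^ 3 + b ^ 4)| := abs_add_le _ _
    _ ≤ |A| + |B * (a ^ 2 + a * b + b ^ 2)|
          + |C * (a ^ 4 + a ^ 3 * b + a ^ 2 * b ^ 2 + a * b ^ 3 + b ^ 4)| := by
        gcongr; exact abs_add_le _ _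
    _ ≤ |A| + 3 * |B| * α + 5 * |C| * α ^ 2 := by
        rw [abs_mul, abs_mul]
        have e1 : |B| * |a ^ 2 + a * b + b ^ 2| ≤ |B| * (3 * α) :=
          mul_le_mul_of_nonneg_left hs (abs_nonneg _)
        have e2 : |C| * |a ^ 4 + a ^ 3 * b + a ^ 2 * b ^ 2 + a * b ^ 3 + b ^ 4|
            ≤ |C| * (5 * α ^ 2) := mul_le_mul_of_nonneg_left ht (abs_nonneg _)
        nlinarith [abs_nonneg B, abs_nonneg C]

private lemma deriv_cd_one {f : ℝ → ℝ} (hf : ContDiff ℝ 2 f) : ContDiff ℝ 1 (deriv f) :=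
  ((contDiff_succ_iff_deriv (n := 1)).mp (by exact_mod_cast hf)).2.2

theorem stmt_17 (ω c : ℝ) (hWC : ω > c ^ 2 / 4 ∨ (ω = c ^ 2 / 4 ∧ c > 0))
    (α₁ : ℝ) (hα₁ : α₁ = 4 * Real.sqrt ω + 2 * c)
    (L : ℕ → ℝ) (hLpos : ∀ n, 0 < L n) (hL : Tendsto L atTop atTop)
    (Φ : ℝ → ℝ) (hΦreg : ContDiff ℝ 2 Φ)
    (hΦeq : ∀ x : ℝ, -deriv (deriv Φ) x + (ω - c ^ 2 / 4) * Φ x +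
      c / 2 * Φ x ^ 3 - 3 / 16 * Φ x ^ 5 = 0)
    (hΦbd : ∀ x : ℝ, Φ x ^ 2 ≤ α₁)
    (hΦ0top : Tendsto Φ atTop (nhds 0)) (hΦ0bot : Tendsto Φ atBot (nhds 0))
    (hΦ'0top : Tendsto (deriv Φ) atTop (nhds 0))
    (hΦ'0bot : Tendsto (deriv Φ) atBot (nhds 0))
    (Φn : ℕ → ℝ → ℝ) (hΦnreg : ∀ n, ContDiff ℝ 2 (Φn n))
    (hΦneq : ∀ n, ∀ x ∈ Set.Icc (-(L n)) (L n),
      -deriv (deriv (Φn n)) x + (ω - c ^ 2 / 4) * Φn n x +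
        c / 2 * Φn n x ^ 3 - 3 / 16 * Φn n x ^ 5 = 0)
    (hΦnbd : ∀ n, ∀ x ∈ Set.Icc (-(L n)) (L n), Φn n x ^ 2 ≤ α₁)
    (hΦn' : ∀ n, deriv (Φn n) (L n) = 0 ∧ deriv (Φn n) (-(L n)) = 0)
    (hL2 : Tendsto (fun n => ∫ x in (-(L n))..(L n), (Φn n x - Φ x) ^ 2)
      atTop (nhds 0)) :
    Tendsto (fun n => ∫ x in (-(L n))..(L n),
        (deriv (deriv (Φn n)) x - deriv (deriv Φ) x) ^ 2) atTop (nhds 0) ∧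
    Tendsto (fun n => ∫ x in (-(L n))..(L n),
        (deriv (Φn n) x - deriv Φ x) ^ 2) atTop (nhds 0) := by
  set K : ℝ := |ω - c ^ 2 / 4| + 3 * |c / 2| * α₁ + 5 * |(3 : ℝ) / 16| * α₁ ^ 2 with hK
  have hα₁0 : 0 ≤ α₁ := le_trans (sq_nonneg (Φ 0)) (hΦbd 0)
  have hK0 : 0 ≤ K := by positivity
  -- basic regularity facts
  have hgd : Differentiable ℝ Φ := hΦreg.differentiable two_ne_zero
  have hgd' : Differentiable ℝ (deriv Φ) := (deriv_cd_one hΦreg).differentiable one_ne_zero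
  have hgc'' : Continuous (deriv (deriv Φ)) := (deriv_cd_one hΦreg).continuous_deriv le_rfl
  have hfd : ∀ n, Differentiable ℝ (Φn n) := fun n => (hΦnreg n).differentiable two_ne_zero
  have hfd' : ∀ n, Differentiable ℝ (deriv (Φn n)) := fun n =>
    (deriv_cd_one (hΦnreg n)).differentiable one_ne_zero
  have hfc'' : ∀ n, Continuous (deriv (deriv (Φn n))) := fun n =>
    (deriv_cd_one (hΦnreg n)).continuous_deriv le_rfl
  have hab : ∀ n, -(L n) ≤ L n := fun n => by linarith [hLpos n]
  -- pointwise bound on second derivatives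
  have hptw : ∀ n, ∀ x ∈ Set.Icc (-(L n)) (L n),
      |deriv (deriv (Φn n)) x - deriv (deriv Φ) x| ≤ K * |Φn n x - Φ x| := by
    intro n x hx
    have e1 := hΦneq n x hx
    have e2 := hΦeq x
    have e3 : deriv (deriv (Φn n)) x - deriv (deriv Φ) x
        = (ω - c ^ 2 / 4) * (Φn n x - Φ x) + c / 2 * (Φn n x ^ 3 - Φ x ^ 3)
          + (-(3 / 16)) * (Φn n x ^ 5 - Φ x ^ 5) := by linarith
    rw [e3]
    have := key_bound (ω - c ^ 2 / 4) (c / 2) (-(3 / 16)) α₁ (Φn n x) (Φ x)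
      (hΦnbd n x hx) (hΦbd x)
    simpa [hK, abs_neg] using this
  have hptw2 : ∀ n, ∀ x ∈ Set.Icc (-(L n)) (L n),
      (deriv (deriv (Φn n)) x - deriv (deriv Φ) x) ^ 2 ≤ K ^ 2 * (Φn n x - Φ x) ^ 2 := by
    intro n x hx
    have h := hptw n x hx
    calc (deriv (deriv (Φn n)) x - deriv (deriv Φ) x) ^ 2
        = |deriv (deriv (Φn n)) x - deriv (deriv Φ) x| ^ 2 := (sq_abs _).symm
      _ ≤ (K * |Φn n x - Φ x|) ^ 2 := by
          apply pow_le_pow_left₀ (abs_nonneg _) h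
      _ = K ^ 2 * (Φn n x - Φ x) ^ 2 := by rw [mul_pow, sq_abs]
  -- integrability
  have int1 : ∀ n, IntervalIntegrable
      (fun x => (deriv (deriv (Φn n)) x - deriv (deriv Φ) x) ^ 2)
      MeasureTheory.volume (-(L n)) (L n) := fun n =>
    (((hfc'' n).sub hgc'').pow 2).intervalIntegrable _ _
  have int2 : ∀ n, IntervalIntegrable (fun x => K ^ 2 * (Φn n x - Φ x) ^ 2)
      MeasureTheory.volume (-(L n)) (L n) := fun n =>
    (continuous_const.mul (((hfd n).continuous.sub hgd.continuous).pow 2)).intervalIntegrable _ _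
  -- first claim
  have claim1 : ∀ n, ∫ x in (-(L n))..(L n),
      (deriv (deriv (Φn n)) x - deriv (deriv Φ) x) ^ 2
      ≤ K ^ 2 * ∫ x in (-(L n))..(L n), (Φn n x - Φ x) ^ 2 := by
    intro n
    rw [← intervalIntegral.integral_const_mul]
    exact intervalIntegral.integral_mono_on (hab n) (int1 n) (int2 n) (hptw2 n)
  have nonneg1 : ∀ n, 0 ≤ ∫ x in (-(L n))..(L n),
      (deriv (deriv (Φn n)) x - deriv (deriv Φ) x) ^ 2 := fun n =>
    intervalIntegral.integral_nonneg (hab n) (fun x _ => sq_nonneg _)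
  have tend1 : Tendsto (fun n => ∫ x in (-(L n))..(L n),
      (deriv (deriv (Φn n)) x - deriv (deriv Φ) x) ^ 2) atTop (nhds 0) := by
    have := hL2.const_mul (K ^ 2)
    rw [mul_zero] at this
    exact squeeze_zero nonneg1 claim1 this
  refine ⟨tend1, ?_⟩
  -- second claim : integration by parts
  have hΦabs : ∀ x, |Φ x| ≤ Real.sqrt α₁ := fun x => abs_le_sqrt_of_sq_le (hΦbd x)
  have ibp : ∀ n, ∫ x in (-(L n))..(L n), (deriv (Φn n) x - deriv Φ x) ^ 2
      = (Φn n (L n) - Φ (L n)) * (deriv (Φn n) (L n) - deriv Φ (L n))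
        - (Φn n (-(L n)) - Φ (-(L n))) * (deriv (Φn n) (-(L n)) - deriv Φ (-(L n)))
        - ∫ x in (-(L n))..(L n),
            (Φn n x - Φ x) * (deriv (deriv (Φn n)) x - deriv (deriv Φ) x) := by
    intro n
    have hu : ∀ x ∈ Set.uIcc (-(L n)) (L n),
        HasDerivAt (fun y => Φn n y - Φ y) (deriv (Φn n) x - deriv Φ x) x := fun x _ =>
      ((hfd n x).hasDerivAt).sub (hgd x).hasDerivAt
    have hv : ∀ x ∈ Set.uIcc (-(L n)) (L n),
        HasDerivAt (fun y => deriv (Φn n) y - deriv Φ y)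
          (deriv (deriv (Φn n)) x - deriv (deriv Φ) x) x := fun x _ =>
      ((hfd' n x).hasDerivAt).sub (hgd' x).hasDerivAt
    have hiu : IntervalIntegrable (fun x => deriv (Φn n) x - deriv Φ x)
        MeasureTheory.volume (-(L n)) (L n) :=
      ((hfd' n).continuous.sub hgd'.continuous).intervalIntegrable _ _
    have hiv : IntervalIntegrable (fun x => deriv (deriv (Φn n)) x - deriv (deriv Φ) x)
        MeasureTheory.volume (-(L n)) (L n) :=
      ((hfc'' n).sub hgc'').intervalIntegrable _ _
    have := intervalIntegral.integral_mul_deriv_eq_deriv_mul hu hv hiu hiv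
    have e : ∫ x in (-(L n))..(L n), (deriv (Φn n) x - deriv Φ x) ^ 2
        = ∫ x in (-(L n))..(L n),
            (deriv (Φn n) x - deriv Φ x) * (deriv (Φn n) x - deriv Φ x) := by
      simp [pow_two]
    rw [e]
    linarith [this]
  -- bound the RHS
  set B : ℕ → ℝ := fun n => 2 * Real.sqrt α₁ * |deriv Φ (L n)|
      + 2 * Real.sqrt α₁ * |deriv Φ (-(L n))|
      + K * ∫ x in (-(L n))..(L n), (Φn n x - Φ x) ^ 2 with hB
  have bound : ∀ n, ∫ x in (-(L n))..(L n), (deriv (Φn n) x - deriv Φ x) ^ 2 ≤ B n := by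
    intro n
    rw [ibp n]
    obtain ⟨hb1, hb2⟩ := hΦn' n
    have hwb : |Φn n (L n) - Φ (L n)| ≤ 2 * Real.sqrt α₁ := by
      have h1 : |Φn n (L n)| ≤ Real.sqrt α₁ :=
        abs_le_sqrt_of_sq_le (hΦnbd n (L n) ⟨hab n, le_rfl⟩)
      calc |Φn n (L n) - Φ (L n)| ≤ |Φn n (L n)| + |Φ (L n)| := abs_sub _ _
        _ ≤ 2 * Real.sqrt α₁ := by linarith [hΦabs (L n)]
    have hwa : |Φn n (-(L n)) - Φ (-(L n))| ≤ 2 * Real.sqrt α₁ := by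
      have h1 : |Φn n (-(L n))| ≤ Real.sqrt α₁ :=
        abs_le_sqrt_of_sq_le (hΦnbd n (-(L n)) ⟨le_rfl, hab n⟩)
      calc |Φn n (-(L n)) - Φ (-(L n))| ≤ |Φn n (-(L n))| + |Φ (-(L n))| := abs_sub _ _
        _ ≤ 2 * Real.sqrt α₁ := by linarith [hΦabs (-(L n))]
    have t1 : (Φn n (L n) - Φ (L n)) * (deriv (Φn n) (L n) - deriv Φ (L n))
        ≤ 2 * Real.sqrt α₁ * |deriv Φ (L n)| := by
      calc (Φn n (L n) - Φ (L n)) * (deriv (Φn n) (L n) - deriv Φ (L n))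
          ≤ |(Φn n (L n) - Φ (L n)) * (deriv (Φn n) (L n) - deriv Φ (L n))| := le_abs_self _
        _ = |Φn n (L n) - Φ (L n)| * |deriv (Φn n) (L n) - deriv Φ (L n)| := abs_mul _ _
        _ = |Φn n (L n) - Φ (L n)| * |deriv Φ (L n)| := by rw [hb1, zero_sub, abs_neg]
        _ ≤ 2 * Real.sqrt α₁ * |deriv Φ (L n)| :=
            mul_le_mul_of_nonneg_right hwb (abs_nonneg _)
    have t2 : -((Φn n (-(L n)) - Φ (-(L n))) * (deriv (Φn n) (-(L n)) - deriv Φ (-(L n))))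
        ≤ 2 * Real.sqrt α₁ * |deriv Φ (-(L n))| := by
      calc -((Φn n (-(L n)) - Φ (-(L n))) * (deriv (Φn n) (-(L n)) - deriv Φ (-(L n))))
          ≤ |(Φn n (-(L n)) - Φ (-(L n))) * (deriv (Φn n) (-(L n)) - deriv Φ (-(L n)))| :=
            neg_le_abs _
        _ = |Φn n (-(L n)) - Φ (-(L n))| * |deriv (Φn n) (-(L n)) - deriv Φ (-(L n))| :=
            abs_mul _ _
        _ = |Φn n (-(L n)) - Φ (-(L n))| * |deriv Φ (-(L n))| := by rw [hb2, zero_sub, abs_neg]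
        _ ≤ 2 * Real.sqrt α₁ * |deriv Φ (-(L n))| :=
            mul_le_mul_of_nonneg_right hwa (abs_nonneg _)
    have t3 : -(∫ x in (-(L n))..(L n),
          (Φn n x - Φ x) * (deriv (deriv (Φn n)) x - deriv (deriv Φ) x))
        ≤ K * ∫ x in (-(L n))..(L n), (Φn n x - Φ x) ^ 2 := by
      have habs : |∫ x in (-(L n))..(L n),
          (Φn n x - Φ x) * (deriv (deriv (Φn n)) x - deriv (deriv Φ) x)|
          ≤ ∫ x in (-(L n))..(L n),
            |(Φn n x - Φ x) * (deriv (deriv (Φn n)) x - deriv (deriv Φ) x)| :=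
        intervalIntegral.abs_integral_le_integral_abs (hab n)
      have hmono : ∫ x in (-(L n))..(L n),
          |(Φn n x - Φ x) * (deriv (deriv (Φn n)) x - deriv (deriv Φ) x)|
          ≤ ∫ x in (-(L n))..(L n), K * (Φn n x - Φ x) ^ 2 := by
        apply intervalIntegral.integral_mono_on (hab n)
        · exact ((((hfd n).continuous.sub hgd.continuous).mul
            ((hfc'' n).sub hgc'')).abs).intervalIntegrable _ _
        · exact (continuous_const.mul
            (((hfd n).continuous.sub hgd.continuous).pow 2)).intervalIntegrable _ _
        · intro x hx
          rw [abs_mul]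
          calc |Φn n x - Φ x| * |deriv (deriv (Φn n)) x - deriv (deriv Φ) x|
              ≤ |Φn n x - Φ x| * (K * |Φn n x - Φ x|) :=
                mul_le_mul_of_nonneg_left (hptw n x hx) (abs_nonneg _)
            _ = K * (Φn n x - Φ x) ^ 2 := by rw [← sq_abs]; ring
      rw [intervalIntegral.integral_const_mul] at hmono
      linarith [neg_le_abs (∫ x in (-(L n))..(L n),
        (Φn n x - Φ x) * (deriv (deriv (Φn n)) x - deriv (deriv Φ) x))]
    simp only [hB]
    linarith
  have nonneg2 : ∀ n, 0 ≤ ∫ x in (-(L n))..(L n), (deriv (Φn n) x - deriv Φ x) ^ 2 := fun n =>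
    intervalIntegral.integral_nonneg (hab n) (fun x _ => sq_nonneg _)
  -- B tends to 0
  have hLneg : Tendsto (fun n => -(L n)) atTop atBot := tendsto_neg_atBot_iff.mpr hL
  have habs_cont : Continuous (fun y : ℝ => |y|) := continuous_abs
  have tb1 : Tendsto (fun n => |deriv Φ (L n)|) atTop (nhds 0) := by
    have := (habs_cont.tendsto' 0 0 abs_zero).comp (hΦ'0top.comp hL)
    exact this
  have tb2 : Tendsto (fun n => |deriv Φ (-(L n))|) atTop (nhds 0) := by
    exact (habs_cont.tendsto' 0 0 abs_zero).comp (hΦ'0bot.comp hLneg)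
  have tB : Tendsto B atTop (nhds 0) := by
    have h1 := tb1.const_mul (2 * Real.sqrt α₁)
    have h2 := tb2.const_mul (2 * Real.sqrt α₁)
    have h3 := hL2.const_mul K
    rw [mul_zero] at h1 h2 h3
    have := (h1.add h2).add h3
    rw [add_zero, add_zero] at this
    exact this
  exact squeeze_zero nonneg2 bound tB
end
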